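/- arXiv:0805.3437 — 3 statements merged into one kernel-verified Lean document; each statement's English description precedes it below -/
import Mathlib

section
/- Let α, β, γ ∈ Aut_Hopf(H), let M be an (α,β)-Yetter-Drinfeld module and N a (β,γ)-Yetter-Drinfeld module. Then M ⊗ N, endowed with the left H-action h·(m⊗n) = h₁·m ⊗ h₂·n and the right H-coaction m⊗n ↦ (m₍₀₎ ⊗ n₍₀₎) ⊗ n₍₁₎m₍₁₎ (structures 'of type one'), is an (α,γ)-Yetter-Drinfeld module. -/
open TensorProduct

noncomputable section

namespace GYD

variable (k H : Type) [Field k] [Ring H] [HopfAlgebra k H]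

/-- `φ` is a Hopf algebra automorphism of `H` (a linear equivalence which is both an
algebra morphism and a coalgebra morphism). -/
def IsHopfAut (φ : H ≃ₗ[k] H) : Prop :=
  (∀ x y : H, φ (x * y) = φ x * φ y) ∧ (φ 1 = 1) ∧
  (∀ h : H, Coalgebra.comul (R := k) (φ h)
      = TensorProduct.map φ.toLinearMap φ.toLinearMap (Coalgebra.comul (R := k) h)) ∧
  (∀ h : H, Coalgebra.counit (R := k) (φ h) = Coalgebra.counit (R := k) h)

/-- `Sinv` is a two-sided inverse of the antipode of `H`. -/
def IsAntipodeInv (Sinv : H → H) : Prop :=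
  (∀ h : H, HopfAlgebra.antipode (R := k) (Sinv h) = h) ∧
  (∀ h : H, Sinv (HopfAlgebra.antipode (R := k) h) = h)

/-- The data `(act, coact)` makes `M` an `(α, β)`-Yetter-Drinfeld module over `H`:
`M` is a left `H`-module, a right `H`-comodule, and the compatibility
`(h·m)₍₀₎ ⊗ (h·m)₍₁₎ = h₂·m₍₀₎ ⊗ β(h₃) m₍₁₎ α(Sinv(h₁))` holds (expressed via
arbitrary finite representations of `(Δ ⊗ id)(Δ h)` and of `coact m`). -/
def IsYD (Sinv α β : H → H) {M : Type} [AddCommGroup M] [Module k M]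
    (act : H →ₗ[k] M →ₗ[k] M) (coact : M →ₗ[k] M ⊗[k] H) : Prop :=
  (∀ m : M, act 1 m = m) ∧
  (∀ (g h : H) (m : M), act (g * h) m = act g (act h m)) ∧
  (∀ m : M, LinearMap.rTensor H coact (coact m)
      = (TensorProduct.assoc k M H H).symm
          (LinearMap.lTensor M (Coalgebra.comul (R := k)) (coact m))) ∧
  (∀ m : M,
    TensorProduct.rid k M (LinearMap.lTensor M (Coalgebra.counit (R := k)) (coact m)) = m) ∧
  (∀ (h : H) (m : M) (s t : Finset ℕ) (a b c : ℕ → H) (m₀ : ℕ → M) (m₁ : ℕ → H),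
    LinearMap.rTensor H (Coalgebra.comul (R := k)) (Coalgebra.comul (R := k) h)
        = ∑ i ∈ s, (a i ⊗ₜ[k] b i) ⊗ₜ[k] c i →
    coact m = ∑ j ∈ t, m₀ j ⊗ₜ[k] m₁ j →
    coact (act h m) = ∑ i ∈ s, ∑ j ∈ t,
      act (b i) (m₀ j) ⊗ₜ[k] (β (c i) * m₁ j * α (Sinv (a i))))

/-- Characterization of the action `h · (m ⊗ n) = θ₁(h₁)·m ⊗ θ₂(h₂)·n` on `M ⊗ N`. -/
def TensorActChar (θ₁ θ₂ : H → H) {M N : Type} [AddCommGroup M] [Module k M]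
    [AddCommGroup N] [Module k N]
    (actM : H →ₗ[k] M →ₗ[k] M) (actN : H →ₗ[k] N →ₗ[k] N)
    (act : H →ₗ[k] (M ⊗[k] N) →ₗ[k] (M ⊗[k] N)) : Prop :=
  ∀ (h : H) (m : M) (n : N) (s : Finset ℕ) (p q : ℕ → H),
    Coalgebra.comul (R := k) h = ∑ i ∈ s, p i ⊗ₜ[k] q i →
    act h (m ⊗ₜ[k] n) = ∑ i ∈ s, actM (θ₁ (p i)) m ⊗ₜ[k] actN (θ₂ (q i)) n

/-- Characterization of the "type two" action `h · (m ⊗ n) = h₂·m ⊗ h₁·n` on `M ⊗ N`. -/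
def TensorActCharTwo {M N : Type} [AddCommGroup M] [Module k M]
    [AddCommGroup N] [Module k N]
    (actM : H →ₗ[k] M →ₗ[k] M) (actN : H →ₗ[k] N →ₗ[k] N)
    (act : H →ₗ[k] (M ⊗[k] N) →ₗ[k] (M ⊗[k] N)) : Prop :=
  ∀ (h : H) (m : M) (n : N) (s : Finset ℕ) (p q : ℕ → H),
    Coalgebra.comul (R := k) h = ∑ i ∈ s, p i ⊗ₜ[k] q i →
    act h (m ⊗ₜ[k] n) = ∑ i ∈ s, actM (q i) m ⊗ₜ[k] actN (p i) n

/-- Characterization of the coaction `m ⊗ n ↦ (m₍₀₎ ⊗ n₍₀₎) ⊗ n₍₁₎ m₍₁₎` on `M ⊗ N`. -/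
def TensorCoactChar {M N : Type} [AddCommGroup M] [Module k M]
    [AddCommGroup N] [Module k N]
    (coactM : M →ₗ[k] M ⊗[k] H) (coactN : N →ₗ[k] N ⊗[k] H)
    (coact : M ⊗[k] N →ₗ[k] (M ⊗[k] N) ⊗[k] H) : Prop :=
  ∀ (m : M) (n : N) (s t : Finset ℕ) (m₀ : ℕ → M) (m₁ : ℕ → H) (n₀ : ℕ → N) (n₁ : ℕ → H),
    coactM m = ∑ i ∈ s, m₀ i ⊗ₜ[k] m₁ i →
    coactN n = ∑ j ∈ t, n₀ j ⊗ₜ[k] n₁ j →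
    coact (m ⊗ₜ[k] n) = ∑ i ∈ s, ∑ j ∈ t, (m₀ i ⊗ₜ[k] n₀ j) ⊗ₜ[k] (n₁ j * m₁ i)

/-- Characterization of the "type two" coaction `m ⊗ n ↦ (m₍₀₎ ⊗ n₍₀₎) ⊗ m₍₁₎ n₍₁₎`. -/
def TensorCoactCharTwo {M N : Type} [AddCommGroup M] [Module k M]
    [AddCommGroup N] [Module k N]
    (coactM : M →ₗ[k] M ⊗[k] H) (coactN : N →ₗ[k] N ⊗[k] H)
    (coact : M ⊗[k] N →ₗ[k] (M ⊗[k] N) ⊗[k] H) : Prop :=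
  ∀ (m : M) (n : N) (s t : Finset ℕ) (m₀ : ℕ → M) (m₁ : ℕ → H) (n₀ : ℕ → N) (n₁ : ℕ → H),
    coactM m = ∑ i ∈ s, m₀ i ⊗ₜ[k] m₁ i →
    coactN n = ∑ j ∈ t, n₀ j ⊗ₜ[k] n₁ j →
    coact (m ⊗ₜ[k] n) = ∑ i ∈ s, ∑ j ∈ t, (m₀ i ⊗ₜ[k] n₀ j) ⊗ₜ[k] (m₁ i * n₁ j)

/-- Characterization of the action `(h · f)(m) = f (θ(h) · m)` on the dual space. -/
def DualActChar (θ : H → H) {M : Type} [AddCommGroup M] [Module k M]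
    (actM : H →ₗ[k] M →ₗ[k] M)
    (actD : H →ₗ[k] Module.Dual k M →ₗ[k] Module.Dual k M) : Prop :=
  ∀ (h : H) (f : Module.Dual k M) (m : M), actD h f m = f (actM (θ h) m)

/-- Characterization of the coaction `f₍₀₎(m) ⊗ f₍₁₎ = f(m₍₀₎) ⊗ σ(m₍₁₎)` on the dual space
(expressed through contraction against evaluation at each `m`). -/
def DualCoactChar (σ : H → H) {M : Type} [AddCommGroup M] [Module k M]
    (coactM : M →ₗ[k] M ⊗[k] H)
    (coactD : Module.Dual k M →ₗ[k] Module.Dual k M ⊗[k] H) : Prop :=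
  ∀ (f : Module.Dual k M) (m : M) (t : Finset ℕ) (m₀ : ℕ → M) (m₁ : ℕ → H),
    coactM m = ∑ j ∈ t, m₀ j ⊗ₜ[k] m₁ j →
    TensorProduct.lid k H (LinearMap.rTensor H (Module.Dual.eval k M m) (coactD f))
      = ∑ j ∈ t, f (m₀ j) • σ (m₁ j)

/-- Characterization of the action `(h · u)(m) = θ(h₁) · u (θ(S(h₂)) · m)` on `End(M)`. -/
def EndActChar (θ : H → H) {M : Type} [AddCommGroup M] [Module k M]
    (actM : H →ₗ[k] M →ₗ[k] M)
    (actE : H →ₗ[k] Module.End k M →ₗ[k] Module.End k M) : Prop :=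
  ∀ (h : H) (u : Module.End k M) (m : M) (s : Finset ℕ) (p q : ℕ → H),
    Coalgebra.comul (R := k) h = ∑ i ∈ s, p i ⊗ₜ[k] q i →
    actE h u m = ∑ i ∈ s,
      actM (θ (p i)) (u (actM (θ (HopfAlgebra.antipode (R := k) (q i))) m))

/-- Characterization of the coaction `u₍₀₎(m) ⊗ u₍₁₎ = u(m₍₀₎)₍₀₎ ⊗ Sinv(m₍₁₎) u(m₍₀₎)₍₁₎`
on `End(M)`, expressed through contraction against evaluation at each `m`. -/
def EndCoactChar (Sinv : H → H) {M : Type} [AddCommGroup M] [Module k M]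
    (coactM : M →ₗ[k] M ⊗[k] H)
    (coactE : Module.End k M →ₗ[k] Module.End k M ⊗[k] H) : Prop :=
  ∀ (u : Module.End k M) (m : M) (t : Finset ℕ) (m₀ : ℕ → M) (m₁ : ℕ → H)
    (r : ℕ → Finset ℕ) (n₀ : ℕ → ℕ → M) (n₁ : ℕ → ℕ → H),
    coactM m = ∑ j ∈ t, m₀ j ⊗ₜ[k] m₁ j →
    (∀ j ∈ t, coactM (u (m₀ j)) = ∑ l ∈ r j, n₀ j l ⊗ₜ[k] n₁ j l) →
    LinearMap.rTensor H (LinearMap.applyₗ (R := k) m) (coactE u)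
      = ∑ j ∈ t, ∑ l ∈ r j, n₀ j l ⊗ₜ[k] (Sinv (m₁ j) * n₁ j l)

/-- Characterization of the action `(h · u)(m) = θ(h₂) · u (θ(Sinv(h₁)) · m)` on `End(M)ᵒᵖ`. -/
def EndOpActChar (θ Sinv : H → H) {M : Type} [AddCommGroup M] [Module k M]
    (actM : H →ₗ[k] M →ₗ[k] M)
    (actE : H →ₗ[k] (Module.End k M)ᵐᵒᵖ →ₗ[k] (Module.End k M)ᵐᵒᵖ) : Prop :=
  ∀ (h : H) (u : (Module.End k M)ᵐᵒᵖ) (m : M) (s : Finset ℕ) (p q : ℕ → H),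
    Coalgebra.comul (R := k) h = ∑ i ∈ s, p i ⊗ₜ[k] q i →
    (actE h u).unop m = ∑ i ∈ s,
      actM (θ (q i)) (u.unop (actM (θ (Sinv (p i))) m))

/-- Characterization of the coaction `u₍₀₎(m) ⊗ u₍₁₎ = u(m₍₀₎)₍₀₎ ⊗ u(m₍₀₎)₍₁₎ S(m₍₁₎)`
on `End(M)ᵒᵖ`, expressed through contraction against evaluation at each `m`. -/
def EndOpCoactChar {M : Type} [AddCommGroup M] [Module k M]
    (coactM : M →ₗ[k] M ⊗[k] H)
    (coactE : (Module.End k M)ᵐᵒᵖ →ₗ[k] (Module.End k M)ᵐᵒᵖ ⊗[k] H) : Prop :=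
  ∀ (u : (Module.End k M)ᵐᵒᵖ) (m : M) (t : Finset ℕ) (m₀ : ℕ → M) (m₁ : ℕ → H)
    (r : ℕ → Finset ℕ) (n₀ : ℕ → ℕ → M) (n₁ : ℕ → ℕ → H),
    coactM m = ∑ j ∈ t, m₀ j ⊗ₜ[k] m₁ j →
    (∀ j ∈ t, coactM (u.unop (m₀ j)) = ∑ l ∈ r j, n₀ j l ⊗ₜ[k] n₁ j l) →
    LinearMap.rTensor H ((LinearMap.applyₗ (R := k) m).comp
        (MulOpposite.opLinearEquiv k).symm.toLinearMap) (coactE u)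
      = ∑ j ∈ t, ∑ l ∈ r j,
          n₀ j l ⊗ₜ[k] (n₁ j l * HopfAlgebra.antipode (R := k) (m₁ j))

/-- `A`, with the Yetter-Drinfeld structure `(act, coact)`, is an algebra in the braided
category of Yetter-Drinfeld modules over `H`. -/
def IsYDAlgebra (Sinv : H → H) {A : Type} [Ring A] [Algebra k A]
    (act : H →ₗ[k] A →ₗ[k] A) (coact : A →ₗ[k] A ⊗[k] H) : Prop :=
  IsYD k H Sinv id id act coact ∧
  (∀ (h : H) (a b : A) (s : Finset ℕ) (p q : ℕ → H),
    Coalgebra.comul (R := k) h = ∑ i ∈ s, p i ⊗ₜ[k] q i →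
    act h (a * b) = ∑ i ∈ s, act (p i) a * act (q i) b) ∧
  (∀ h : H, act h 1 = Coalgebra.counit (R := k) h • (1 : A)) ∧
  (coact 1 = (1 : A) ⊗ₜ[k] (1 : H)) ∧
  (∀ (a b : A) (s t : Finset ℕ) (a₀ : ℕ → A) (a₁ : ℕ → H) (b₀ : ℕ → A) (b₁ : ℕ → H),
    coact a = ∑ i ∈ s, a₀ i ⊗ₜ[k] a₁ i →
    coact b = ∑ j ∈ t, b₀ j ⊗ₜ[k] b₁ j →
    coact (a * b) = ∑ i ∈ s, ∑ j ∈ t, (a₀ i * b₀ j) ⊗ₜ[k] (b₁ j * a₁ i))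

/-- Characterization of the smash product multiplication
`(a # b)(a' # b') = a a'₍₀₎ # (a'₍₁₎ · b) b'` on `A ⊗ B`. -/
def SmashMulChar {A B : Type} [Ring A] [Algebra k A] [Ring B] [Algebra k B]
    (actB : H →ₗ[k] B →ₗ[k] B) (coactA : A →ₗ[k] A ⊗[k] H)
    (mul : (A ⊗[k] B) →ₗ[k] (A ⊗[k] B) →ₗ[k] (A ⊗[k] B)) : Prop :=
  ∀ (a a' : A) (b b' : B) (t : Finset ℕ) (a₀ : ℕ → A) (a₁ : ℕ → H),
    coactA a' = ∑ j ∈ t, a₀ j ⊗ₜ[k] a₁ j →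
    mul (a ⊗ₜ[k] b) (a' ⊗ₜ[k] b') = ∑ j ∈ t, (a * a₀ j) ⊗ₜ[k] (actB (a₁ j) b * b')

end GYD

namespace YDAux

variable {k : Type} [Field k]

section Rep
variable {P Q E : Type} [AddCommGroup P] [Module k P] [AddCommGroup Q] [Module k Q]
  [AddCommGroup E] [Module k E]

lemma exists_rep' (x : P ⊗[k] Q) :
    ∃ (n : ℕ) (p : ℕ → P) (q : ℕ → Q), x = ∑ i ∈ Finset.range n, p i ⊗ₜ[k] q i := by
  induction x with
  | zero => exact ⟨0, 0, 0, by simp⟩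
  | tmul p q => exact ⟨1, fun _ => p, fun _ => q, by simp⟩
  | add x y hx hy =>
    obtain ⟨n, p, q, hx⟩ := hx
    obtain ⟨m, p', q', hy⟩ := hy
    refine ⟨n + m, fun i => if i < n then p i else p' (i - n),
      fun i => if i < n then q i else q' (i - n), ?_⟩
    rw [Finset.sum_range_add, hx, hy]
    congr 1
    · exact Finset.sum_congr rfl fun i hi => by
        simp [Finset.mem_range.mp hi]
    · exact Finset.sum_congr rfl fun i _ => by simp

lemma exists_rep (x : P ⊗[k] Q) :
    ∃ (s : Finset ℕ) (p : ℕ → P) (q : ℕ → Q), x = ∑ i ∈ s, p i ⊗ₜ[k] q i := by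
  obtain ⟨n, p, q, h⟩ := exists_rep' x
  exact ⟨Finset.range n, p, q, h⟩

lemma lift_rep {ι : Type*} (B : P →ₗ[k] Q →ₗ[k] E) {x : P ⊗[k] Q} {s : Finset ι}
    {p : ι → P} {q : ι → Q} (h : x = ∑ i ∈ s, p i ⊗ₜ[k] q i) :
    TensorProduct.lift B x = ∑ i ∈ s, B (p i) (q i) := by
  rw [h, map_sum]; simp

lemma bilin_congr {ι ι' : Type*} (B : P →ₗ[k] Q →ₗ[k] E) {s : Finset ι} {t : Finset ι'}
    {p : ι → P} {q : ι → Q} {p' : ι' → P} {q' : ι' → Q}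
    (h : ∑ i ∈ s, p i ⊗ₜ[k] q i = ∑ j ∈ t, p' j ⊗ₜ[k] q' j) :
    ∑ i ∈ s, B (p i) (q i) = ∑ j ∈ t, B (p' j) (q' j) := by
  have := congrArg (TensorProduct.lift B) h
  simpa using this

lemma bilin_congr2 {ι ι' : Type*} (B : P →ₗ[k] Q →ₗ[k] E) {s : Finset ι} {t : ι → Finset ι'}
    {p : ι → ι' → P} {q : ι → ι' → Q} {p₀ : P} {q₀ : Q}
    (h : ∑ i ∈ s, ∑ j ∈ t i, p i j ⊗ₜ[k] q i j = p₀ ⊗ₜ[k] q₀) :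
    ∑ i ∈ s, ∑ j ∈ t i, B (p i j) (q i j) = B p₀ q₀ := by
  have := congrArg (TensorProduct.lift B) h
  simpa [map_sum] using this

end Rep

section Hopf
variable {H : Type} [Ring H] [HopfAlgebra k H]

local notation "Δ" => (Coalgebra.comul (R := k) (A := H))
local notation "ε" => (Coalgebra.counit (R := k) (A := H))
local notation "S" => (HopfAlgebra.antipode (R := k) (A := H))

lemma counit_rep_right {ι : Type*} {x : H} {s : Finset ι} {p q : ι → H}
    (hx : Δ x = ∑ i ∈ s, p i ⊗ₜ[k] q i) :
    ∑ i ∈ s, ε (p i) • q i = x := by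
  have h1 : (Coalgebra.counit (R := k)).rTensor H (Δ x) = (1:k) ⊗ₜ[k] x :=
    Coalgebra.rTensor_counit_comul x
  rw [hx, map_sum] at h1
  have := congrArg (TensorProduct.lid k H) h1
  simpa [map_sum] using this

lemma counit_rep_left {ι : Type*} {x : H} {s : Finset ι} {p q : ι → H}
    (hx : Δ x = ∑ i ∈ s, p i ⊗ₜ[k] q i) :
    ∑ i ∈ s, ε (q i) • p i = x := by
  have h1 : (Coalgebra.counit (R := k)).lTensor H (Δ x) = x ⊗ₜ[k] (1:k) :=
    Coalgebra.lTensor_counit_comul x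
  rw [hx, map_sum] at h1
  have := congrArg (TensorProduct.rid k H) h1
  simpa [map_sum] using this

lemma rep_antipode_mul {ι : Type*} {x : H} {s : Finset ι} {p q : ι → H}
    (hx : Δ x = ∑ i ∈ s, p i ⊗ₜ[k] q i) :
    ∑ i ∈ s, S (p i) * q i = ε x • (1:H) := by
  have h1 := HopfAlgebra.mul_antipode_rTensor_comul_apply (R := k) x
  rw [hx, map_sum, map_sum] at h1
  simpa [Algebra.algebraMap_eq_smul_one] using h1

lemma rep_mul_antipode {ι : Type*} {x : H} {s : Finset ι} {p q : ι → H}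
    (hx : Δ x = ∑ i ∈ s, p i ⊗ₜ[k] q i) :
    ∑ i ∈ s, p i * S (q i) = ε x • (1:H) := by
  have h1 := HopfAlgebra.mul_antipode_lTensor_comul_apply (R := k) x
  rw [hx, map_sum, map_sum] at h1
  simpa [Algebra.algebraMap_eq_smul_one] using h1

lemma antipode_one' : S (1:H) = 1 := by
  have h : Δ (1:H) = ∑ i ∈ ({0}: Finset ℕ), (1:H) ⊗ₜ[k] (1:H) := by
    simp [Algebra.TensorProduct.one_def]
  have := rep_antipode_mul h
  simpa using this

/-- extended antipode identity `∑ S(x₁) x₂ ⊗ x₃ = 1 ⊗ x` over a chain representation. -/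
lemma ext1 {ι ι' : Type*} {x : H} {s : Finset ι} {p q : ι → H}
    (hx : Δ x = ∑ i ∈ s, p i ⊗ₜ[k] q i)
    {t : ι → Finset ι'} {y z : ι → ι' → H}
    (hy : ∀ i ∈ s, Δ (p i) = ∑ j ∈ t i, y i j ⊗ₜ[k] z i j) :
    ∑ i ∈ s, ∑ j ∈ t i, (S (y i j) * z i j) ⊗ₜ[k] q i = (1:H) ⊗ₜ[k] x := by
  calc ∑ i ∈ s, ∑ j ∈ t i, (S (y i j) * z i j) ⊗ₜ[k] q i
      = ∑ i ∈ s, (∑ j ∈ t i, S (y i j) * z i j) ⊗ₜ[k] q i := by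
        simp [TensorProduct.sum_tmul]
    _ = ∑ i ∈ s, (ε (p i) • (1:H)) ⊗ₜ[k] q i := by
        refine Finset.sum_congr rfl fun i hi => by rw [rep_antipode_mul (hy i hi)]
    _ = (1:H) ⊗ₜ[k] (∑ i ∈ s, ε (p i) • q i) := by
        rw [TensorProduct.tmul_sum]
        exact Finset.sum_congr rfl fun i _ => by rw [TensorProduct.smul_tmul]
    _ = (1:H) ⊗ₜ[k] x := by rw [counit_rep_right hx]

lemma rep_rTensor_comul {ι ι' : Type*} {x : H} {s : Finset ι} {x₁ x₂ : ι → H}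
    (hx : Δ x = ∑ i ∈ s, x₁ i ⊗ₜ[k] x₂ i)
    {t : ι → Finset ι'} {y z : ι → ι' → H}
    (hy : ∀ i ∈ s, Δ (x₁ i) = ∑ j ∈ t i, y i j ⊗ₜ[k] z i j) :
    (Coalgebra.comul (R := k)).rTensor H (Δ x)
      = ∑ i ∈ s, ∑ j ∈ t i, (y i j ⊗ₜ[k] z i j) ⊗ₜ[k] x₂ i := by
  rw [hx, map_sum]
  exact Finset.sum_congr rfl fun i hi => by
    rw [LinearMap.rTensor_tmul, hy i hi, TensorProduct.sum_tmul]

/-- Sweedler 3-fold coassociativity workhorse. -/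
lemma sw3 {ι ι' ι'' : Type*} {E : Type} [AddCommGroup E] [Module k E]
    (Γ : (H ⊗[k] H) ⊗[k] H →ₗ[k] E) {x : H} {s : Finset ι} {x₁ x₂ : ι → H}
    (hx : Δ x = ∑ i ∈ s, x₁ i ⊗ₜ[k] x₂ i)
    {t : ι → Finset ι'} {y z : ι → ι' → H}
    (hy : ∀ i ∈ s, Δ (x₁ i) = ∑ j ∈ t i, y i j ⊗ₜ[k] z i j)
    {r : ι → Finset ι''} {u w : ι → ι'' → H}
    (hu : ∀ i ∈ s, Δ (x₂ i) = ∑ l ∈ r i, u i l ⊗ₜ[k] w i l) :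
    ∑ i ∈ s, ∑ j ∈ t i, Γ ((y i j ⊗ₜ[k] z i j) ⊗ₜ[k] x₂ i)
      = ∑ i ∈ s, ∑ l ∈ r i, Γ ((x₁ i ⊗ₜ[k] u i l) ⊗ₜ[k] w i l) := by
  have h1 : (Coalgebra.comul (R := k)).rTensor H (Δ x)
      = ∑ i ∈ s, ∑ j ∈ t i, (y i j ⊗ₜ[k] z i j) ⊗ₜ[k] x₂ i := rep_rTensor_comul hx hy
  have hin : (Coalgebra.comul (R := k)).lTensor H (Δ x)
      = ∑ i ∈ s, ∑ l ∈ r i, x₁ i ⊗ₜ[k] (u i l ⊗ₜ[k] w i l) := by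
    rw [hx, map_sum]
    exact Finset.sum_congr rfl fun i hi => by
      rw [LinearMap.lTensor_tmul, hu i hi, TensorProduct.tmul_sum]
  have h2 : (Coalgebra.comul (R := k)).rTensor H (Δ x)
      = ∑ i ∈ s, ∑ l ∈ r i, (x₁ i ⊗ₜ[k] u i l) ⊗ₜ[k] w i l := by
    have h2' := congrArg (TensorProduct.assoc k H H H).symm.toLinearMap hin
    simp only [LinearEquiv.coe_coe, map_sum, TensorProduct.assoc_symm_tmul] at h2'
    rw [← h2']
    exact (Coalgebra.coassoc_symm_apply x).symm
  have h3 := congrArg Γ (h1.symm.trans h2)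
  simpa [map_sum] using h3

/-- extended antipode identity for a right-comb chain: `∑ S(x₁) x₂ ⊗ x₃ = 1 ⊗ x`. -/
lemma ext1r {ι ι'' : Type*} {x : H} {s : Finset ι} {x₁ x₂ : ι → H}
    (hx : Δ x = ∑ i ∈ s, x₁ i ⊗ₜ[k] x₂ i)
    {r : ι → Finset ι''} {u w : ι → ι'' → H}
    (hu : ∀ i ∈ s, Δ (x₂ i) = ∑ l ∈ r i, u i l ⊗ₜ[k] w i l) :
    ∑ i ∈ s, ∑ l ∈ r i, (S (x₁ i) * u i l) ⊗ₜ[k] w i l = (1:H) ⊗ₜ[k] x := by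
  choose t' y z hy using fun i => exists_rep (Δ (x₁ i))
  have h1 := sw3 (LinearMap.rTensor H ((LinearMap.mul' k H) ∘ₗ (LinearMap.rTensor H S)))
    hx (fun i _ => hy i) hu
  simp only [LinearMap.rTensor_tmul, LinearMap.comp_apply, LinearMap.mul'_apply] at h1
  rw [← h1]
  exact ext1 hx (fun i _ => hy i)

lemma antipode_mul' (a b : H) : S (a * b) = S b * S a := by
  obtain ⟨sa, u, v, ra1⟩ := exists_rep (Δ a)
  choose ta w x ra2 using fun i => exists_rep (Δ (v i))
  obtain ⟨sb, p, q, rb1⟩ := exists_rep (Δ b)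
  choose tb r' z rb2 using fun l => exists_rep (Δ (q l))
  have key : S b * S a = S (a * b) := by
    have hA : a = ∑ i ∈ sa, ε (v i) • u i := (counit_rep_left ra1).symm
    have hB : b = ∑ l ∈ sb, ε (q l) • p l := (counit_rep_left rb1).symm
    set Bil1 : H →ₗ[k] H →ₗ[k] H := ∑ l ∈ sb, ∑ m ∈ tb l,
      (LinearMap.mul k H).compl₁₂ (LinearMap.mulLeft k (S (p l)))
        ((LinearMap.mulLeft k (r' l m)) ∘ₗ (S ∘ₗ LinearMap.mulRight k (z l m))) with hBil1
    set Bil2 : H →ₗ[k] H →ₗ[k] H :=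
      (LinearMap.mul k H).compl₁₂ (LinearMap.id) (S ∘ₗ LinearMap.mulLeft k a) with hBil2
    have hBil1app : ∀ c d : H, Bil1 c d
        = ∑ l ∈ sb, ∑ m ∈ tb l, (S (p l) * c) * (r' l m * S (d * z l m)) := by
      intro c d
      simp [hBil1, LinearMap.sum_apply, LinearMap.compl₁₂_apply, LinearMap.mul_apply',
        LinearMap.mulLeft_apply, LinearMap.mulRight_apply]
    have hBil2app : ∀ c d : H, Bil2 c d = c * S (a * d) := by
      intro c d
      simp [hBil2, LinearMap.compl₁₂_apply, LinearMap.mul_apply', LinearMap.mulLeft_apply]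
    calc S b * S a
        = (∑ l ∈ sb, ε (q l) • S (p l)) * (∑ i ∈ sa, ε (v i) • S (u i)) := by
          conv_lhs => rw [hA, hB]
          simp [map_sum]
      _ = ∑ l ∈ sb, ∑ i ∈ sa, (ε (v i * q l)) • (S (p l) * S (u i)) := by
          rw [Finset.sum_mul_sum]
          exact Finset.sum_congr rfl fun l _ => Finset.sum_congr rfl fun i _ => by
            rw [smul_mul_smul_comm, Bialgebra.counit_mul, mul_comm (ε (q l)) (ε (v i))]
      _ = ∑ l ∈ sb, ∑ i ∈ sa, ∑ j ∈ ta i, ∑ m ∈ tb l,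
            (S (p l) * S (u i)) * ((w i j * r' l m) * S (x i j * z l m)) := by
          refine Finset.sum_congr rfl fun l _ => Finset.sum_congr rfl fun i _ => ?_
          have hvq : Δ (v i * q l) = ∑ jm ∈ (ta i) ×ˢ (tb l),
              (w i jm.1 * r' l jm.2) ⊗ₜ[k] (x i jm.1 * z l jm.2) := by
            rw [Bialgebra.comul_mul, ra2 i, rb2 l, Finset.sum_mul_sum, Finset.sum_product]
            exact Finset.sum_congr rfl fun jj _ => Finset.sum_congr rfl fun mm _ => by
              rw [Algebra.TensorProduct.tmul_mul_tmul]
          have hcol := rep_mul_antipode hvq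
          rw [Finset.sum_product] at hcol
          calc ε (v i * q l) • (S (p l) * S (u i))
              = (S (p l) * S (u i)) * (ε (v i * q l) • (1:H)) := by
                rw [mul_smul_comm, mul_one]
            _ = (S (p l) * S (u i)) * ∑ j ∈ ta i, ∑ m ∈ tb l,
                  (w i j * r' l m) * S (x i j * z l m) := by rw [hcol]
            _ = ∑ j ∈ ta i, ∑ m ∈ tb l,
                  (S (p l) * S (u i)) * ((w i j * r' l m) * S (x i j * z l m)) := by
                rw [Finset.mul_sum]
                exact Finset.sum_congr rfl fun j _ => by rw [Finset.mul_sum]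
      _ = ∑ i ∈ sa, ∑ j ∈ ta i, Bil1 (S (u i) * w i j) (x i j) := by
          rw [Finset.sum_comm]
          refine Finset.sum_congr rfl fun i _ => ?_
          rw [Finset.sum_comm]
          refine Finset.sum_congr rfl fun j _ => ?_
          rw [hBil1app]
          exact Finset.sum_congr rfl fun l _ => Finset.sum_congr rfl fun m _ => by
            simp only [mul_assoc]
      _ = Bil1 1 a := bilin_congr2 Bil1 (ext1r ra1 (fun i _ => ra2 i))
      _ = ∑ l ∈ sb, ∑ m ∈ tb l, Bil2 (S (p l) * r' l m) (z l m) := by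
          rw [hBil1app]
          exact Finset.sum_congr rfl fun l _ => Finset.sum_congr rfl fun m _ => by
            rw [hBil2app]
            simp only [mul_one, mul_assoc]
      _ = Bil2 1 b := bilin_congr2 Bil2 (ext1r rb1 (fun l _ => rb2 l))
      _ = S (a * b) := by rw [hBil2app, one_mul]
  exact key.symm

end Hopf
section Gad
variable {H : Type} [Ring H] [HopfAlgebra k H]

local notation "Δ" => (Coalgebra.comul (R := k) (A := H))

section P1
variable {P : Type} [AddCommGroup P] [Module k P]

/-- The Yetter-Drinfeld gadget: `Ygad act θ₁ θ₂ ((a⊗b)⊗c) (x⊗y) = act b x ⊗ (θ₂ c * (y * θ₁ a))`. -/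
def Ygad (act : H →ₗ[k] P →ₗ[k] P) (θ₁ θ₂ : H →ₗ[k] H) :
    (H ⊗[k] H) ⊗[k] H →ₗ[k] (P ⊗[k] H) →ₗ[k] (P ⊗[k] H) :=
  TensorProduct.curry
    ((TensorProduct.map (TensorProduct.lift act)
        ((LinearMap.mul' k H) ∘ₗ LinearMap.lTensor H (LinearMap.mul' k H))) ∘ₗ
      (LinearMap.lTensor (H ⊗[k] P) ((TensorProduct.leftComm k H H H).toLinearMap ∘ₗ
          (LinearMap.lTensor H (TensorProduct.comm k H H).toLinearMap))) ∘ₗ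
      (TensorProduct.assoc k (H ⊗[k] P) H (H ⊗[k] H)).toLinearMap ∘ₗ
      (TensorProduct.comm k (H ⊗[k] H) ((H ⊗[k] P) ⊗[k] H)).toLinearMap ∘ₗ
      (tensorTensorTensorComm k H (H ⊗[k] P) H H).toLinearMap ∘ₗ
      (LinearMap.rTensor (H ⊗[k] H) (TensorProduct.assoc k H H P).toLinearMap) ∘ₗ
      (tensorTensorTensorComm k (H ⊗[k] H) H P H).toLinearMap ∘ₗ
      (LinearMap.rTensor (P ⊗[k] H) (TensorProduct.map (LinearMap.rTensor H θ₁) θ₂)))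

@[simp] lemma Ygad_tmul (act : H →ₗ[k] P →ₗ[k] P) (θ₁ θ₂ : H →ₗ[k] H)
    (a b c : H) (x : P) (y : H) :
    Ygad act θ₁ θ₂ ((a ⊗ₜ[k] b) ⊗ₜ[k] c) (x ⊗ₜ[k] y)
      = act b x ⊗ₜ[k] (θ₂ c * (y * θ₁ a)) := by
  simp [Ygad, TensorProduct.curry_apply, LinearMap.rTensor_tmul, LinearMap.lTensor_tmul,
    TensorProduct.map_tmul, tensorTensorTensorComm_tmul, TensorProduct.assoc_tmul,
    TensorProduct.comm_tmul, TensorProduct.leftComm_tmul, TensorProduct.lift.tmul,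
    LinearMap.mul'_apply]

end P1

section MN
variable {M N : Type} [AddCommGroup M] [Module k M] [AddCommGroup N] [Module k N]

/-- The tensor coaction gadget: `Phic (m⊗x) (n⊗y) = (m⊗n)⊗(y*x)`. -/
def Phic : M ⊗[k] H →ₗ[k] (N ⊗[k] H) →ₗ[k] (M ⊗[k] N) ⊗[k] H :=
  TensorProduct.curry
    ((LinearMap.lTensor (M ⊗[k] N) ((LinearMap.mul' k H) ∘ₗ (TensorProduct.comm k H H).toLinearMap)) ∘ₗ
      (tensorTensorTensorComm k M H N H).toLinearMap)

@[simp] lemma Phic_tmul (m : M) (n : N) (x y : H) :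
    Phic (m ⊗ₜ[k] x) (n ⊗ₜ[k] y) = (m ⊗ₜ[k] n) ⊗ₜ[k] (y * x) := by
  simp [Phic, TensorProduct.curry_apply, tensorTensorTensorComm_tmul,
    TensorProduct.comm_tmul, LinearMap.mul'_apply]

end MN
end Gad

section Rep3
variable {P Q R : Type} [AddCommGroup P] [Module k P] [AddCommGroup Q] [Module k Q]
  [AddCommGroup R] [Module k R]

lemma exists_rep3' (x : (P ⊗[k] Q) ⊗[k] R) :
    ∃ (n : ℕ) (a : ℕ → P) (b : ℕ → Q) (c : ℕ → R),
      x = ∑ i ∈ Finset.range n, (a i ⊗ₜ[k] b i) ⊗ₜ[k] c i := by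
  induction x with
  | zero => exact ⟨0, 0, 0, 0, by simp⟩
  | tmul u r =>
    obtain ⟨n, a, b, hu⟩ := exists_rep' u
    exact ⟨n, a, b, fun _ => r, by rw [hu, TensorProduct.sum_tmul]⟩
  | add x y hx hy =>
    obtain ⟨n, a, b, c, hx⟩ := hx
    obtain ⟨m, a', b', c', hy⟩ := hy
    refine ⟨n + m, fun i => if i < n then a i else a' (i - n),
      fun i => if i < n then b i else b' (i - n),
      fun i => if i < n then c i else c' (i - n), ?_⟩
    rw [Finset.sum_range_add, hx, hy]
    congr 1
    · exact Finset.sum_congr rfl fun i hi => by simp [Finset.mem_range.mp hi]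
    · exact Finset.sum_congr rfl fun i _ => by simp

lemma exists_rep3 (x : (P ⊗[k] Q) ⊗[k] R) :
    ∃ (s : Finset ℕ) (a : ℕ → P) (b : ℕ → Q) (c : ℕ → R),
      x = ∑ i ∈ s, (a i ⊗ₜ[k] b i) ⊗ₜ[k] c i := by
  obtain ⟨n, a, b, c, h⟩ := exists_rep3' x
  exact ⟨Finset.range n, a, b, c, h⟩

end Rep3

section SinvSec
variable {H : Type} [Ring H] [HopfAlgebra k H]

local notation "Δ" => (Coalgebra.comul (R := k) (A := H))
local notation "ε" => (Coalgebra.counit (R := k) (A := H))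
local notation "S" => (HopfAlgebra.antipode (R := k) (A := H))

variable (Sinv : H → H)

lemma antipode_injective (hS2 : ∀ h : H, Sinv (S h) = h) :
    Function.Injective (S : H → H) :=
  fun a b hab => by rw [← hS2 a, hab, hS2]

/-- `Sinv` as a linear map. -/
def mkSinvL (hS1 : ∀ h : H, S (Sinv h) = h) (hS2 : ∀ h : H, Sinv (S h) = h) :
    H →ₗ[k] H where
  toFun := Sinv
  map_add' a b := antipode_injective Sinv hS2 (by rw [map_add, hS1, hS1, hS1])
  map_smul' c a := antipode_injective Sinv hS2 (by
    rw [RingHom.id_apply, map_smul, hS1, hS1])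

@[simp] lemma mkSinvL_apply (hS1 : ∀ h : H, S (Sinv h) = h) (hS2 : ∀ h : H, Sinv (S h) = h)
    (x : H) : mkSinvL Sinv hS1 hS2 x = Sinv x := rfl

/-- key collapse identity: `∑ S⁻¹(x₂) x₁ = ε(x) 1`. -/
lemma col1 (hS1 : ∀ h : H, S (Sinv h) = h) (hS2 : ∀ h : H, Sinv (S h) = h)
    {ι : Type*} {x : H} {s : Finset ι} {p q : ι → H}
    (hx : Δ x = ∑ i ∈ s, p i ⊗ₜ[k] q i) :
    ∑ i ∈ s, Sinv (q i) * p i = ε x • (1:H) := by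
  apply antipode_injective Sinv hS2
  rw [map_sum, map_smul, antipode_one']
  calc ∑ i ∈ s, S (Sinv (q i) * p i)
      = ∑ i ∈ s, S (p i) * q i := by
        exact Finset.sum_congr rfl fun i _ => by rw [antipode_mul', hS1]
    _ = ε x • (1:H) := rep_antipode_mul hx
end SinvSec

section Key2
variable {H : Type} [Ring H] [HopfAlgebra k H]
variable {M N : Type} [AddCommGroup M] [Module k M] [AddCommGroup N] [Module k N]

local notation "Δ" => (Coalgebra.comul (R := k) (A := H))
local notation "ε" => (Coalgebra.counit (R := k) (A := H))

set_option maxHeartbeats 4000000 in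
/-- The core Hopf-algebraic computation for the Yetter-Drinfeld condition on `M ⊗ N`. -/
lemma key2 (actM : H →ₗ[k] M →ₗ[k] M) (actN : H →ₗ[k] N →ₗ[k] N)
    (act₁ : H →ₗ[k] (M ⊗[k] N) →ₗ[k] (M ⊗[k] N))
    (SL aL bL cL : H →ₗ[k] H)
    (hbmul : ∀ x y : H, bL (x * y) = bL x * bL y) (hbone : bL 1 = 1)
    (hcol : ∀ (x : H) (s : Finset ℕ) (p q : ℕ → H), Δ x = ∑ i ∈ s, p i ⊗ₜ[k] q i →
      ∑ i ∈ s, SL (q i) * p i = (ε x) • (1 : H))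
    (hactpf : ∀ (h : H) (m : M) (n : N),
      act₁ h (m ⊗ₜ[k] n) = TensorProduct.map (actM.flip m) (actN.flip n) (Δ h))
    (m₀ : M) (m₁ : H) (n₀ : N) (n₁ : H) (h : H)
    (sI : Finset ℕ) (A B : ℕ → H) (R1 : Δ h = ∑ i ∈ sI, A i ⊗ₜ[k] B i) :
    ∑ i ∈ sI, Phic
        (Ygad actM (aL ∘ₗ SL) bL
          (LinearMap.rTensor H Δ (Δ (A i))) (m₀ ⊗ₜ[k] m₁))
        (Ygad actN (bL ∘ₗ SL) cL
          (LinearMap.rTensor H Δ (Δ (B i))) (n₀ ⊗ₜ[k] n₁))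
      = Ygad act₁ (aL ∘ₗ SL) cL (LinearMap.rTensor H Δ (Δ h))
          ((m₀ ⊗ₜ[k] n₀) ⊗ₜ[k] (n₁ * m₁)) := by
  classical
  set u : M ⊗[k] H := m₀ ⊗ₜ[k] m₁ with hu
  set v : N ⊗[k] H := n₀ ⊗ₜ[k] n₁ with hv
  set YM := Ygad actM (aL ∘ₗ SL) bL with hYM
  set YN := Ygad actN (bL ∘ₗ SL) cL with hYN
  set Bg : (H ⊗[k] H) ⊗[k] H →ₗ[k] ((H ⊗[k] H) ⊗[k] H) →ₗ[k] (M ⊗[k] N) ⊗[k] H :=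
    TensorProduct.curry ((TensorProduct.lift (Phic (k := k))) ∘ₗ
      TensorProduct.map (YM.flip u) (YN.flip v)) with hBg
  have hBgApp : ∀ X Y, Bg X Y = Phic (YM X u) (YN Y v) := by
    intro X Y
    simp [hBg, TensorProduct.curry_apply, TensorProduct.map_tmul, TensorProduct.lift.tmul]
  -- representations
  choose JA C D RA using fun i => exists_rep (k := k) (Δ (A i))
  choose ZC c₁ c₂ RC using fun i j => exists_rep (k := k) (Δ (C i j))
  choose KB e₁ e₂ RB using fun i => exists_rep (k := k) (Δ (B i))
  choose YE f₁ f₂ RE using fun i κ => exists_rep (k := k) (Δ (e₁ i κ))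
  choose KG G₁ G₂ RG using fun i κ => exists_rep (k := k) (Δ (e₂ i κ))
  choose WD d₁ Vt RD using fun i j => exists_rep (k := k) (Δ (D i j))
  choose ZV q₁ V₂ RV using fun i j w => exists_rep (k := k) (Δ (Vt i j w))
  choose ZQ ν₁ ν₂ RQ using fun i j w z => exists_rep (k := k) (Δ (q₁ i j w z))
  choose ZR r₁ r₂ RV2 using fun i j w z => exists_rep (k := k) (Δ (V₂ i j w z))
  -- the gadget maps for the rebracketing moves
  set Γ₁ : (H ⊗[k] H) ⊗[k] H →ₗ[k] (M ⊗[k] N) ⊗[k] H :=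
    (TensorProduct.lift Bg) ∘ₗ (TensorProduct.map (LinearMap.rTensor H (Coalgebra.comul (R := k))) ((LinearMap.rTensor H (Coalgebra.comul (R := k))) ∘ₗ (Coalgebra.comul (R := k)))) with hΓ₁
  have hΓ₁eval : ∀ a b c : H,
      Γ₁ ((a ⊗ₜ[k] b) ⊗ₜ[k] c) = Bg ((Δ a) ⊗ₜ[k] b) (LinearMap.rTensor H Δ (Δ c)) := by
    intro a b c
    simp [hΓ₁, TensorProduct.map_tmul, TensorProduct.lift.tmul]
  set Γ₂ : ℕ → ((H ⊗[k] H) ⊗[k] H →ₗ[k] (M ⊗[k] N) ⊗[k] H) := fun i =>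
    (TensorProduct.lift Bg) ∘ₗ
      (TensorProduct.map ((TensorProduct.mk k (H ⊗[k] H) H) (Coalgebra.comul (R := k) (A i))) (LinearMap.rTensor H (Coalgebra.comul (R := k)))) ∘ₗ
      (TensorProduct.assoc k H H H).toLinearMap with hΓ₂
  have hΓ₂eval : ∀ (i : ℕ) (b uu w : H),
      Γ₂ i ((b ⊗ₜ[k] uu) ⊗ₜ[k] w) = Bg ((Δ (A i)) ⊗ₜ[k] b) ((Δ uu) ⊗ₜ[k] w) := by
    intro i b uu w
    simp [hΓ₂, TensorProduct.assoc_tmul, TensorProduct.map_tmul, TensorProduct.lift.tmul,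
      TensorProduct.mk_apply]
  set Γ₃ : (H ⊗[k] H) ⊗[k] H →ₗ[k] (M ⊗[k] N) ⊗[k] H :=
    (TensorProduct.lift Bg) ∘ₗ
      (LinearMap.lTensor ((H ⊗[k] H) ⊗[k] H) (LinearMap.rTensor H (Coalgebra.comul (R := k)))) ∘ₗ
      (TensorProduct.assoc k ((H ⊗[k] H) ⊗[k] H) H H).toLinearMap ∘ₗ
      (LinearMap.rTensor H (TensorProduct.assoc k (H ⊗[k] H) H H).symm.toLinearMap) ∘ₗ
      (LinearMap.rTensor H (TensorProduct.map (Coalgebra.comul (R := k)) (Coalgebra.comul (R := k)))) with hΓ₃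
  have hΓ₃eval : ∀ (a b c : H) {ι : Type} (sb : Finset ι) (y z : ι → H),
      Δ b = ∑ j ∈ sb, y j ⊗ₜ[k] z j →
      Γ₃ ((a ⊗ₜ[k] b) ⊗ₜ[k] c)
        = ∑ j ∈ sb, Bg ((Δ a) ⊗ₜ[k] y j) ((Δ (z j)) ⊗ₜ[k] c) := by
    intro a b c ι sb y z hb
    simp only [hΓ₃, LinearMap.comp_apply, LinearMap.rTensor_tmul, TensorProduct.map_tmul]
    rw [hb, TensorProduct.tmul_sum]
    simp only [map_sum, TensorProduct.sum_tmul]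
    refine Finset.sum_congr rfl fun j _ => ?_
    simp [TensorProduct.assoc_symm_tmul, TensorProduct.assoc_tmul,
      TensorProduct.lift.tmul, LinearEquiv.coe_coe]
  set ψ : H →ₗ[k] H ⊗[k] (H ⊗[k] H) := (LinearMap.lTensor H (Coalgebra.comul (R := k))) ∘ₗ (Coalgebra.comul (R := k)) with hψ
  set Γ₅ : ℕ → ((H ⊗[k] H) ⊗[k] H →ₗ[k] (M ⊗[k] N) ⊗[k] H) := fun i =>
    (TensorProduct.lift Bg) ∘ₗ
      (LinearMap.lTensor ((H ⊗[k] H) ⊗[k] H)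
        ((TensorProduct.mk k (H ⊗[k] H) H).flip (B i))) ∘ₗ
      (TensorProduct.assoc k (H ⊗[k] H) H (H ⊗[k] H)).symm.toLinearMap ∘ₗ
      (LinearMap.lTensor (H ⊗[k] H) ψ) with hΓ₅
  have hΓ₅eval : ∀ (i : ℕ) (a b c : H) {ι ι' : Type} (sc : Finset ι) (d V : ι → H)
      (hc : Δ c = ∑ w ∈ sc, d w ⊗ₜ[k] V w)
      (sc2 : ι → Finset ι') (q V2 : ι → ι' → H)
      (hc2 : ∀ w ∈ sc, Δ (V w) = ∑ z ∈ sc2 w, q w z ⊗ₜ[k] V2 w z),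
      Γ₅ i ((a ⊗ₜ[k] b) ⊗ₜ[k] c)
        = ∑ w ∈ sc, ∑ z ∈ sc2 w,
            Bg ((a ⊗ₜ[k] b) ⊗ₜ[k] d w) ((q w z ⊗ₜ[k] V2 w z) ⊗ₜ[k] B i) := by
    intro i a b c ι ι' sc d V hc sc2 q V2 hc2
    simp only [hΓ₅, LinearMap.comp_apply, LinearMap.lTensor_tmul]
    have : ψ c = ∑ w ∈ sc, ∑ z ∈ sc2 w, d w ⊗ₜ[k] (q w z ⊗ₜ[k] V2 w z) := by
      simp only [hψ, LinearMap.comp_apply]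
      rw [hc, map_sum]
      refine Finset.sum_congr rfl fun w hw => ?_
      rw [LinearMap.lTensor_tmul, hc2 w hw, TensorProduct.tmul_sum]
    rw [this, TensorProduct.tmul_sum, map_sum, map_sum, map_sum]
    refine Finset.sum_congr rfl fun w _ => ?_
    rw [TensorProduct.tmul_sum, map_sum, map_sum, map_sum]
    refine Finset.sum_congr rfl fun z _ => ?_
    simp [TensorProduct.assoc_symm_tmul, TensorProduct.lift.tmul, TensorProduct.mk_apply]
  set Γ₆ : ℕ → ℕ → ℕ → ((H ⊗[k] H) ⊗[k] H →ₗ[k] (M ⊗[k] N) ⊗[k] H) := fun i j w =>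
    (TensorProduct.lift Bg) ∘ₗ
      (TensorProduct.map ((TensorProduct.mk k (H ⊗[k] H) H) (C i j ⊗ₜ[k] d₁ i j w))
        ((TensorProduct.mk k (H ⊗[k] H) H).flip (B i))) ∘ₗ
      (TensorProduct.assoc k H H H).toLinearMap with hΓ₆
  have hΓ₆eval : ∀ (i j w : ℕ) (a b c : H),
      Γ₆ i j w ((a ⊗ₜ[k] b) ⊗ₜ[k] c)
        = Bg ((C i j ⊗ₜ[k] d₁ i j w) ⊗ₜ[k] a) ((b ⊗ₜ[k] c) ⊗ₜ[k] B i) := by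
    intro i j w a b c
    simp [hΓ₆, TensorProduct.assoc_tmul, TensorProduct.map_tmul, TensorProduct.lift.tmul,
      TensorProduct.mk_apply]
  -- Start the chain of rewritings
  calc ∑ i ∈ sI, Phic (YM (LinearMap.rTensor H Δ (Δ (A i))) u)
        (YN (LinearMap.rTensor H Δ (Δ (B i))) v)
      = ∑ i ∈ sI, ∑ j ∈ JA i, Γ₁ ((C i j ⊗ₜ[k] D i j) ⊗ₜ[k] B i) := by
        refine Finset.sum_congr rfl fun i _ => ?_
        rw [← hBgApp, RA i, map_sum]
        simp only [LinearMap.rTensor_tmul, map_sum, LinearMap.sum_apply]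
        refine Finset.sum_congr rfl fun j _ => ?_
        rw [hΓ₁eval]
    _ = ∑ i ∈ sI, ∑ κ ∈ KB i, Γ₁ ((A i ⊗ₜ[k] e₁ i κ) ⊗ₜ[k] e₂ i κ) :=
        sw3 Γ₁ R1 (fun i _ => RA i) (fun i _ => RB i)
    _ = ∑ i ∈ sI, ∑ κ ∈ KB i, ∑ z ∈ KG i κ, Γ₂ i ((e₁ i κ ⊗ₜ[k] G₁ i κ z) ⊗ₜ[k] G₂ i κ z) := by
        refine Finset.sum_congr rfl fun i _ => Finset.sum_congr rfl fun κ _ => ?_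
        rw [hΓ₁eval, RG i κ, map_sum]
        simp only [LinearMap.rTensor_tmul, map_sum]
        refine Finset.sum_congr rfl fun z _ => ?_
        rw [hΓ₂eval]
    _ = ∑ i ∈ sI, ∑ κ ∈ KB i, ∑ y ∈ YE i κ, Γ₂ i ((f₁ i κ y ⊗ₜ[k] f₂ i κ y) ⊗ₜ[k] e₂ i κ) := by
        refine Finset.sum_congr rfl fun i _ => ?_
        exact (sw3 (Γ₂ i) (RB i) (fun κ _ => RE i κ) (fun κ _ => RG i κ)).symm
    _ = ∑ i ∈ sI, ∑ κ ∈ KB i, Γ₃ ((A i ⊗ₜ[k] e₁ i κ) ⊗ₜ[k] e₂ i κ) := by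
        refine Finset.sum_congr rfl fun i _ => Finset.sum_congr rfl fun κ _ => ?_
        rw [hΓ₃eval (A i) (e₁ i κ) (e₂ i κ) (YE i κ) (f₁ i κ) (f₂ i κ) (RE i κ)]
        refine Finset.sum_congr rfl fun y _ => ?_
        rw [hΓ₂eval]
    _ = ∑ i ∈ sI, ∑ j ∈ JA i, Γ₃ ((C i j ⊗ₜ[k] D i j) ⊗ₜ[k] B i) :=
        (sw3 Γ₃ R1 (fun i _ => RA i) (fun i _ => RB i)).symm
    _ = ∑ i ∈ sI, ∑ j ∈ JA i, ∑ z ∈ ZC i j, Γ₅ i ((c₁ i j z ⊗ₜ[k] c₂ i j z) ⊗ₜ[k] D i j) := by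
        refine Finset.sum_congr rfl fun i _ => Finset.sum_congr rfl fun j _ => ?_
        rw [hΓ₃eval (C i j) (D i j) (B i) (WD i j) (d₁ i j) (Vt i j) (RD i j)]
        calc ∑ w ∈ WD i j, Bg ((Δ (C i j)) ⊗ₜ[k] d₁ i j w) ((Δ (Vt i j w)) ⊗ₜ[k] B i)
            = ∑ w ∈ WD i j, ∑ z ∈ ZC i j, ∑ z2 ∈ ZV i j w,
                Bg ((c₁ i j z ⊗ₜ[k] c₂ i j z) ⊗ₜ[k] d₁ i j w)
                  ((q₁ i j w z2 ⊗ₜ[k] V₂ i j w z2) ⊗ₜ[k] B i) := by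
              refine Finset.sum_congr rfl fun w _ => ?_
              rw [RC i j, RV i j w]
              simp only [map_sum, LinearMap.sum_apply, TensorProduct.sum_tmul]
              first
              | rfl
              | exact Finset.sum_comm
          _ = ∑ z ∈ ZC i j, ∑ w ∈ WD i j, ∑ z2 ∈ ZV i j w,
                Bg ((c₁ i j z ⊗ₜ[k] c₂ i j z) ⊗ₜ[k] d₁ i j w)
                  ((q₁ i j w z2 ⊗ₜ[k] V₂ i j w z2) ⊗ₜ[k] B i) := Finset.sum_comm
          _ = ∑ z ∈ ZC i j, Γ₅ i ((c₁ i j z ⊗ₜ[k] c₂ i j z) ⊗ₜ[k] D i j) := by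
              refine Finset.sum_congr rfl fun z _ => ?_
              rw [hΓ₅eval i (c₁ i j z) (c₂ i j z) (D i j) (WD i j) (d₁ i j) (Vt i j)
                (RD i j) (ZV i j) (q₁ i j) (V₂ i j) (fun w _ => RV i j w)]
    _ = ∑ i ∈ sI, ∑ j ∈ JA i, ∑ w ∈ WD i j, Γ₅ i ((C i j ⊗ₜ[k] d₁ i j w) ⊗ₜ[k] Vt i j w) := by
        refine Finset.sum_congr rfl fun i _ => ?_
        exact sw3 (Γ₅ i) (RA i) (fun j _ => RC i j) (fun j _ => RD i j)
    _ = ∑ i ∈ sI, ∑ j ∈ JA i, ∑ w ∈ WD i j, ∑ z2 ∈ ZV i j w, ∑ z3 ∈ ZR i j w z2,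
          Γ₆ i j w ((q₁ i j w z2 ⊗ₜ[k] r₁ i j w z2 z3) ⊗ₜ[k] r₂ i j w z2 z3) := by
        refine Finset.sum_congr rfl fun i _ => Finset.sum_congr rfl fun j _ =>
          Finset.sum_congr rfl fun w _ => ?_
        rw [hΓ₅eval i (C i j) (d₁ i j w) (Vt i j w) (ZV i j w) (q₁ i j w) (V₂ i j w)
          (RV i j w) (ZR i j w) (r₁ i j w) (r₂ i j w) (fun z _ => RV2 i j w z)]
        refine Finset.sum_congr rfl fun z2 _ => ?_
        refine Finset.sum_congr rfl fun z3 _ => (hΓ₆eval i j w _ _ _).symm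
    _ = ∑ i ∈ sI, ∑ j ∈ JA i, ∑ w ∈ WD i j, ∑ z2 ∈ ZV i j w, ∑ z4 ∈ ZQ i j w z2,
          Γ₆ i j w ((ν₁ i j w z2 z4 ⊗ₜ[k] ν₂ i j w z2 z4) ⊗ₜ[k] V₂ i j w z2) := by
        refine Finset.sum_congr rfl fun i _ => Finset.sum_congr rfl fun j _ =>
          Finset.sum_congr rfl fun w _ => ?_
        exact (sw3 (Γ₆ i j w) (RV i j w) (fun z _ => RQ i j w z)
          (fun z _ => RV2 i j w z)).symm
    _ = ∑ i ∈ sI, ∑ j ∈ JA i, ∑ w ∈ WD i j,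
          (actM (d₁ i j w) m₀ ⊗ₜ[k] actN (Vt i j w) n₀) ⊗ₜ[k]
            (cL (B i) * (n₁ * (m₁ * aL (SL (C i j))))) := by
        refine Finset.sum_congr rfl fun i _ => Finset.sum_congr rfl fun j _ =>
          Finset.sum_congr rfl fun w _ => ?_
        calc ∑ z2 ∈ ZV i j w, ∑ z4 ∈ ZQ i j w z2,
              Γ₆ i j w ((ν₁ i j w z2 z4 ⊗ₜ[k] ν₂ i j w z2 z4) ⊗ₜ[k] V₂ i j w z2)
            = ∑ z2 ∈ ZV i j w, (ε (q₁ i j w z2)) •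
                ((actM (d₁ i j w) m₀ ⊗ₜ[k] actN (V₂ i j w z2) n₀) ⊗ₜ[k]
                  (cL (B i) * (n₁ * (m₁ * aL (SL (C i j)))))) := by
              refine Finset.sum_congr rfl fun z2 _ => ?_
              calc ∑ z4 ∈ ZQ i j w z2,
                    Γ₆ i j w ((ν₁ i j w z2 z4 ⊗ₜ[k] ν₂ i j w z2 z4) ⊗ₜ[k] V₂ i j w z2)
                  = ∑ z4 ∈ ZQ i j w z2,
                      (actM (d₁ i j w) m₀ ⊗ₜ[k] actN (V₂ i j w z2) n₀) ⊗ₜ[k]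
                        (cL (B i) * (n₁ *
                          (bL (SL (ν₂ i j w z2 z4) * ν₁ i j w z2 z4) *
                            (m₁ * aL (SL (C i j)))))) := by
                    refine Finset.sum_congr rfl fun z4 _ => ?_
                    rw [hΓ₆eval, hBgApp, hu, hv, hYM, hYN, Ygad_tmul, Ygad_tmul, Phic_tmul,
                      hbmul]
                    simp only [LinearMap.comp_apply, mul_assoc]
                _ = (actM (d₁ i j w) m₀ ⊗ₜ[k] actN (V₂ i j w z2) n₀) ⊗ₜ[k]
                      (cL (B i) * (n₁ *
                        (bL ((ε (q₁ i j w z2)) • (1:H)) * (m₁ * aL (SL (C i j)))))) := by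
                    rw [← TensorProduct.tmul_sum, ← Finset.mul_sum, ← Finset.mul_sum,
                      ← Finset.sum_mul, ← map_sum, hcol _ _ _ _ (RQ i j w z2)]
                _ = (ε (q₁ i j w z2)) •
                      ((actM (d₁ i j w) m₀ ⊗ₜ[k] actN (V₂ i j w z2) n₀) ⊗ₜ[k]
                        (cL (B i) * (n₁ * (m₁ * aL (SL (C i j)))))) := by
                    rw [map_smul, hbone, smul_mul_assoc, one_mul, mul_smul_comm,
                      mul_smul_comm, TensorProduct.tmul_smul]
          _ = (actM (d₁ i j w) m₀ ⊗ₜ[k] actN (Vt i j w) n₀) ⊗ₜ[k]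
                (cL (B i) * (n₁ * (m₁ * aL (SL (C i j))))) := by
              have hcounit : ∑ z2 ∈ ZV i j w, (ε (q₁ i j w z2)) • V₂ i j w z2 = Vt i j w :=
                counit_rep_right (RV i j w)
              calc ∑ z2 ∈ ZV i j w, (ε (q₁ i j w z2)) •
                    ((actM (d₁ i j w) m₀ ⊗ₜ[k] actN (V₂ i j w z2) n₀) ⊗ₜ[k]
                      (cL (B i) * (n₁ * (m₁ * aL (SL (C i j))))))
                  = ∑ z2 ∈ ZV i j w,
                      ((actM (d₁ i j w) m₀ ⊗ₜ[k] actN ((ε (q₁ i j w z2)) • V₂ i j w z2) n₀)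
                        ⊗ₜ[k] (cL (B i) * (n₁ * (m₁ * aL (SL (C i j)))))) := by
                    refine Finset.sum_congr rfl fun z2 _ => ?_
                    rw [map_smul, LinearMap.smul_apply, TensorProduct.tmul_smul,
                      TensorProduct.smul_tmul']
                _ = (actM (d₁ i j w) m₀ ⊗ₜ[k] actN (Vt i j w) n₀) ⊗ₜ[k]
                      (cL (B i) * (n₁ * (m₁ * aL (SL (C i j))))) := by
                    have hact2 : ∑ z2 ∈ ZV i j w,
                        actN ((ε (q₁ i j w z2)) • V₂ i j w z2) n₀ = actN (Vt i j w) n₀ := by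
                      rw [← hcounit, map_sum, LinearMap.sum_apply]
                    rw [← TensorProduct.sum_tmul, ← TensorProduct.tmul_sum, hact2]
    _ = Ygad act₁ (aL ∘ₗ SL) cL (LinearMap.rTensor H Δ (Δ h))
          ((m₀ ⊗ₜ[k] n₀) ⊗ₜ[k] (n₁ * m₁)) := by
        rw [rep_rTensor_comul R1 (fun i _ => RA i)]
        simp only [map_sum, LinearMap.sum_apply, Ygad_tmul, LinearMap.comp_apply]
        refine Finset.sum_congr rfl fun i _ => Finset.sum_congr rfl fun j _ => ?_
        rw [hactpf (D i j) m₀ n₀, RD i j]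
        simp only [map_sum, TensorProduct.map_tmul, LinearMap.flip_apply,
          TensorProduct.sum_tmul]
        refine Finset.sum_congr rfl fun w _ => ?_
        rw [mul_assoc]
end Key2
end YDAux

set_option maxHeartbeats 3000000 in
theorem statement_0
    (k H : Type) [Field k] [Ring H] [HopfAlgebra k H]
    (Sinv : H → H) (hS : GYD.IsAntipodeInv k H Sinv)
    (α β γ : H ≃ₗ[k] H)
    (hα : GYD.IsHopfAut k H α) (hβ : GYD.IsHopfAut k H β) (hγ : GYD.IsHopfAut k H γ)
    (M N : Type) [AddCommGroup M] [Module k M] [AddCommGroup N] [Module k N]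
    (actM : H →ₗ[k] M →ₗ[k] M) (coactM : M →ₗ[k] M ⊗[k] H)
    (actN : H →ₗ[k] N →ₗ[k] N) (coactN : N →ₗ[k] N ⊗[k] H)
    (hM : GYD.IsYD k H Sinv ⇑α ⇑β actM coactM)
    (hN : GYD.IsYD k H Sinv ⇑β ⇑γ actN coactN)
    (act₁ : H →ₗ[k] (M ⊗[k] N) →ₗ[k] (M ⊗[k] N))
    (coact₁ : M ⊗[k] N →ₗ[k] (M ⊗[k] N) ⊗[k] H)
    (hact : GYD.TensorActChar k H id id actM actN act₁)
    (hcoact : GYD.TensorCoactChar k H coactM coactN coact₁) :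
    GYD.IsYD k H Sinv ⇑α ⇑γ act₁ coact₁ := by
  classical
  obtain ⟨hS1, hS2⟩ := hS
  obtain ⟨hM1, hM2, hM3, hM4, hM5⟩ := hM
  obtain ⟨hN1, hN2, hN3, hN4, hN5⟩ := hN
  set SL : H →ₗ[k] H := YDAux.mkSinvL (k := k) Sinv hS1 hS2 with hSLdef
  have hSLa : ∀ x : H, SL x = Sinv x := fun x => rfl
  set aL : H →ₗ[k] H := (α : H →ₗ[k] H) with haLdef
  set bL : H →ₗ[k] H := (β : H →ₗ[k] H) with hbLdef
  set cL : H →ₗ[k] H := (γ : H →ₗ[k] H) with hcLdef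
  have haLa : ∀ x : H, aL x = α x := fun x => rfl
  have hbLa : ∀ x : H, bL x = β x := fun x => rfl
  have hcLa : ∀ x : H, cL x = γ x := fun x => rfl
  -- point-free characterization of the action on the tensor product
  have hactpf : ∀ (h : H) (m : M) (n : N),
      act₁ h (m ⊗ₜ[k] n)
        = TensorProduct.map (actM.flip m) (actN.flip n) (Coalgebra.comul (R := k) h) := by
    intro h m n
    obtain ⟨s, p, q, hrep⟩ := YDAux.exists_rep (Coalgebra.comul (R := k) h)
    rw [hact h m n s p q hrep, hrep, map_sum]
    simp
  -- point-free characterization of the coaction on the tensor product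
  have hcoactpf : ∀ (m : M) (n : N),
      coact₁ (m ⊗ₜ[k] n) = YDAux.Phic (coactM m) (coactN n) := by
    intro m n
    obtain ⟨s, m₀, m₁, hm⟩ := YDAux.exists_rep (coactM m)
    obtain ⟨t, n₀, n₁, hn⟩ := YDAux.exists_rep (coactN n)
    rw [hcoact m n s t m₀ m₁ n₀ n₁ hm hn, hm, hn]
    simp only [map_sum, LinearMap.sum_apply, YDAux.Phic_tmul]
    exact Finset.sum_comm
  -- point-free YD conditions for M and N
  have hM5pt : ∀ (h : H) (m : M), coactM (actM h m)
      = YDAux.Ygad actM (aL ∘ₗ SL) bL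
          (LinearMap.rTensor H (Coalgebra.comul (R := k)) (Coalgebra.comul (R := k) h))
          (coactM m) := by
    intro h m
    obtain ⟨s, a, b, c, hX⟩ := YDAux.exists_rep3
      (LinearMap.rTensor H (Coalgebra.comul (R := k)) (Coalgebra.comul (R := k) h))
    obtain ⟨t, m₀, m₁, hm⟩ := YDAux.exists_rep (coactM m)
    rw [hM5 h m s t a b c m₀ m₁ hX hm, hX, hm]
    simp only [map_sum, LinearMap.sum_apply, YDAux.Ygad_tmul, LinearMap.comp_apply,
      YDAux.mkSinvL_apply, LinearEquiv.coe_coe]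
    rw [Finset.sum_comm]
    exact Finset.sum_congr rfl fun i _ => Finset.sum_congr rfl fun j _ => by
      rw [mul_assoc]; simp only [hSLa, haLa, hbLa, hcLa]
  have hN5pt : ∀ (h : H) (n : N), coactN (actN h n)
      = YDAux.Ygad actN (bL ∘ₗ SL) cL
          (LinearMap.rTensor H (Coalgebra.comul (R := k)) (Coalgebra.comul (R := k) h))
          (coactN n) := by
    intro h n
    obtain ⟨s, a, b, c, hX⟩ := YDAux.exists_rep3
      (LinearMap.rTensor H (Coalgebra.comul (R := k)) (Coalgebra.comul (R := k) h))
    obtain ⟨t, n₀, n₁, hn⟩ := YDAux.exists_rep (coactN n)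
    rw [hN5 h n s t a b c n₀ n₁ hX hn, hX, hn]
    simp only [map_sum, LinearMap.sum_apply, YDAux.Ygad_tmul, LinearMap.comp_apply,
      YDAux.mkSinvL_apply, LinearEquiv.coe_coe]
    rw [Finset.sum_comm]
    exact Finset.sum_congr rfl fun i _ => Finset.sum_congr rfl fun j _ => by
      rw [mul_assoc]; simp only [hSLa, haLa, hbLa, hcLa]
  refine ⟨?_, ?_, ?_, ?_, ?_⟩
  · -- unit acts trivially
    intro x
    induction x using TensorProduct.induction_on with
    | zero => simp
    | tmul m n =>
      rw [hactpf, Bialgebra.comul_one, Algebra.TensorProduct.one_def]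
      simp [hM1, hN1]
    | add u v hu hv => rw [map_add, hu, hv]
  · -- multiplicativity of the action
    intro g h x
    induction x using TensorProduct.induction_on with
    | zero => simp
    | tmul m n =>
      obtain ⟨s, p, q, hg⟩ := YDAux.exists_rep (Coalgebra.comul (R := k) g)
      obtain ⟨t, p', q', hh⟩ := YDAux.exists_rep (Coalgebra.comul (R := k) h)
      have hL : act₁ (g * h) (m ⊗ₜ[k] n)
          = ∑ i ∈ s, ∑ j ∈ t, actM (p i) (actM (p' j) m) ⊗ₜ[k] actN (q i) (actN (q' j) n) := by
        rw [hactpf (g*h) m n, Bialgebra.comul_mul, hg, hh, Finset.sum_mul_sum]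
        simp only [map_sum, Algebra.TensorProduct.tmul_mul_tmul, TensorProduct.map_tmul,
          LinearMap.flip_apply, hM2, hN2]
      have hR : act₁ g (act₁ h (m ⊗ₜ[k] n))
          = ∑ j ∈ t, ∑ i ∈ s, actM (p i) (actM (p' j) m) ⊗ₜ[k] actN (q i) (actN (q' j) n) := by
        rw [hactpf h m n, hh]
        simp only [map_sum, TensorProduct.map_tmul, LinearMap.flip_apply]
        simp only [hactpf, hg, map_sum, TensorProduct.map_tmul, LinearMap.flip_apply]
      rw [hL, hR, Finset.sum_comm]
    | add u v hu hv => simp only [map_add, hu, hv]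
  · -- coassociativity of the coaction
    intro x
    induction x using TensorProduct.induction_on with
    | zero => simp
    | tmul m n =>
      obtain ⟨s, m₀, m₁, hm⟩ := YDAux.exists_rep (coactM m)
      obtain ⟨t, n₀, n₁, hn⟩ := YDAux.exists_rep (coactN n)
      choose LM u w hMs using fun g => YDAux.exists_rep (Coalgebra.comul (R := k) (m₁ g))
      choose LN u' w' hNs using fun e => YDAux.exists_rep (Coalgebra.comul (R := k) (n₁ e))
      have hE : coact₁ (m ⊗ₜ[k] n)
          = ∑ g ∈ s, ∑ e ∈ t, (m₀ g ⊗ₜ[k] n₀ e) ⊗ₜ[k] (n₁ e * m₁ g) := by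
        rw [hcoactpf m n, hm, hn]
        simp only [map_sum, LinearMap.sum_apply, YDAux.Phic_tmul]
        exact Finset.sum_comm
      have hMco : ∑ g ∈ s, coactM (m₀ g) ⊗ₜ[k] m₁ g
          = ∑ g ∈ s, ∑ l ∈ LM g, (m₀ g ⊗ₜ[k] u g l) ⊗ₜ[k] w g l := by
        have hl : (LinearMap.lTensor M (Coalgebra.comul (R := k))) (coactM m)
            = ∑ g ∈ s, ∑ l ∈ LM g, m₀ g ⊗ₜ[k] (u g l ⊗ₜ[k] w g l) := by
          rw [hm, map_sum]
          exact Finset.sum_congr rfl fun g _ => by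
            rw [LinearMap.lTensor_tmul, hMs g, TensorProduct.tmul_sum]
        have h2 := congrArg (TensorProduct.assoc k M H H).symm.toLinearMap hl
        simp only [LinearEquiv.coe_coe, map_sum, TensorProduct.assoc_symm_tmul] at h2
        have h1 : (LinearMap.rTensor H coactM) (coactM m)
            = ∑ g ∈ s, coactM (m₀ g) ⊗ₜ[k] m₁ g := by
          rw [hm, map_sum]; simp
        rw [← h1, hM3 m]
        exact h2
      have hNco : ∑ e ∈ t, coactN (n₀ e) ⊗ₜ[k] n₁ e
          = ∑ e ∈ t, ∑ l ∈ LN e, (n₀ e ⊗ₜ[k] u' e l) ⊗ₜ[k] w' e l := by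
        have hl : (LinearMap.lTensor N (Coalgebra.comul (R := k))) (coactN n)
            = ∑ e ∈ t, ∑ l ∈ LN e, n₀ e ⊗ₜ[k] (u' e l ⊗ₜ[k] w' e l) := by
          rw [hn, map_sum]
          exact Finset.sum_congr rfl fun e _ => by
            rw [LinearMap.lTensor_tmul, hNs e, TensorProduct.tmul_sum]
        have h2 := congrArg (TensorProduct.assoc k N H H).symm.toLinearMap hl
        simp only [LinearEquiv.coe_coe, map_sum, TensorProduct.assoc_symm_tmul] at h2
        have h1 : (LinearMap.rTensor H coactN) (coactN n)
            = ∑ e ∈ t, coactN (n₀ e) ⊗ₜ[k] n₁ e := by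
          rw [hn, map_sum]; simp
        rw [← h1, hN3 n]
        exact h2
      have hLHS : (LinearMap.rTensor H coact₁) (coact₁ (m ⊗ₜ[k] n))
          = ∑ g ∈ s, ∑ l ∈ LM g, ∑ e ∈ t, ∑ l' ∈ LN e,
              ((m₀ g ⊗ₜ[k] n₀ e) ⊗ₜ[k] (u' e l' * u g l)) ⊗ₜ[k] (w' e l' * w g l) := by
        rw [hE]
        simp only [map_sum, LinearMap.rTensor_tmul, hcoactpf]
        rw [Finset.sum_comm]
        calc ∑ e ∈ t, ∑ g ∈ s,
                (YDAux.Phic (coactM (m₀ g)) (coactN (n₀ e))) ⊗ₜ[k] (n₁ e * m₁ g)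
            = ∑ e ∈ t, ∑ g ∈ s, ∑ l ∈ LM g,
                (YDAux.Phic (m₀ g ⊗ₜ[k] u g l) (coactN (n₀ e))) ⊗ₜ[k] (n₁ e * w g l) := by
              refine Finset.sum_congr rfl fun e _ => ?_
              have := congrArg (TensorProduct.map
                ((YDAux.Phic (k := k) (H := H) (M := M) (N := N)).flip (coactN (n₀ e)))
                (LinearMap.mulLeft k (n₁ e))) hMco
              simpa [map_sum, TensorProduct.map_tmul] using this
          _ = ∑ g ∈ s, ∑ l ∈ LM g, ∑ e ∈ t, ∑ l' ∈ LN e,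
                ((m₀ g ⊗ₜ[k] n₀ e) ⊗ₜ[k] (u' e l' * u g l)) ⊗ₜ[k] (w' e l' * w g l) := by
              rw [Finset.sum_comm]
              refine Finset.sum_congr rfl fun g _ => ?_
              rw [Finset.sum_comm]
              refine Finset.sum_congr rfl fun l hl => ?_
              have := congrArg (TensorProduct.map
                (YDAux.Phic (k := k) (m₀ g ⊗ₜ[k] u g l))
                (LinearMap.mulRight k (w g l))) hNco
              simpa [map_sum, TensorProduct.map_tmul] using this
      have hRHS : (TensorProduct.assoc k (M ⊗[k] N) H H).symm
            ((LinearMap.lTensor (M ⊗[k] N) (Coalgebra.comul (R := k))) (coact₁ (m ⊗ₜ[k] n)))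
          = ∑ g ∈ s, ∑ e ∈ t, ∑ l' ∈ LN e, ∑ l ∈ LM g,
              ((m₀ g ⊗ₜ[k] n₀ e) ⊗ₜ[k] (u' e l' * u g l)) ⊗ₜ[k] (w' e l' * w g l) := by
        have hl2 : (LinearMap.lTensor (M ⊗[k] N) (Coalgebra.comul (R := k))) (coact₁ (m ⊗ₜ[k] n))
            = ∑ g ∈ s, ∑ e ∈ t, ∑ l' ∈ LN e, ∑ l ∈ LM g,
                (m₀ g ⊗ₜ[k] n₀ e) ⊗ₜ[k] ((u' e l' * u g l) ⊗ₜ[k] (w' e l' * w g l)) := by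
          rw [hE, map_sum]
          refine Finset.sum_congr rfl fun g _ => ?_
          rw [map_sum]
          refine Finset.sum_congr rfl fun e _ => ?_
          rw [LinearMap.lTensor_tmul, Bialgebra.comul_mul, hNs e, hMs g,
            Finset.sum_mul_sum]
          rw [TensorProduct.tmul_sum]
          refine Finset.sum_congr rfl fun l' _ => ?_
          rw [TensorProduct.tmul_sum]
          refine Finset.sum_congr rfl fun l _ => ?_
          rw [Algebra.TensorProduct.tmul_mul_tmul]
        have h3 := congrArg (TensorProduct.assoc k (M ⊗[k] N) H H).symm.toLinearMap hl2
        simp only [LinearEquiv.coe_coe, map_sum, TensorProduct.assoc_symm_tmul] at h3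
        exact h3
      rw [hLHS, hRHS]
      refine Finset.sum_congr rfl fun g _ => ?_
      rw [Finset.sum_comm]
      refine Finset.sum_congr rfl fun e _ => Finset.sum_comm
    | add a b ha hb => simp only [map_add, ha, hb]

  · -- counit property
    intro x
    induction x using TensorProduct.induction_on with
    | zero => simp
    | tmul m n =>
      obtain ⟨s, m₀, m₁, hm⟩ := YDAux.exists_rep (coactM m)
      obtain ⟨t, n₀, n₁, hn⟩ := YDAux.exists_rep (coactN n)
      have hM4r : ∑ g ∈ s, Coalgebra.counit (R := k) (m₁ g) • m₀ g = m := by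
        have h0 := hM4 m
        rw [hm, map_sum, map_sum] at h0
        simpa using h0
      have hN4r : ∑ e ∈ t, Coalgebra.counit (R := k) (n₁ e) • n₀ e = n := by
        have h0 := hN4 n
        rw [hn, map_sum, map_sum] at h0
        simpa using h0
      have hE : coact₁ (m ⊗ₜ[k] n)
          = ∑ g ∈ s, ∑ e ∈ t, (m₀ g ⊗ₜ[k] n₀ e) ⊗ₜ[k] (n₁ e * m₁ g) := by
        rw [hcoactpf m n, hm, hn]
        simp only [map_sum, LinearMap.sum_apply, YDAux.Phic_tmul]
        exact Finset.sum_comm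
      rw [hE]
      calc (TensorProduct.rid k (M ⊗[k] N))
            ((LinearMap.lTensor (M ⊗[k] N) (Coalgebra.counit (R := k)))
              (∑ g ∈ s, ∑ e ∈ t, (m₀ g ⊗ₜ[k] n₀ e) ⊗ₜ[k] (n₁ e * m₁ g)))
          = ∑ g ∈ s, ∑ e ∈ t,
              (Coalgebra.counit (R := k) (m₁ g) • m₀ g) ⊗ₜ[k]
                (Coalgebra.counit (R := k) (n₁ e) • n₀ e) := by
            simp only [map_sum]
            refine Finset.sum_congr rfl fun g _ => Finset.sum_congr rfl fun e _ => ?_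
            rw [LinearMap.lTensor_tmul, TensorProduct.rid_tmul, Bialgebra.counit_mul,
              mul_comm (Coalgebra.counit (R := k) (n₁ e)) (Coalgebra.counit (R := k) (m₁ g)),
              mul_smul, TensorProduct.smul_tmul', TensorProduct.smul_tmul,
              TensorProduct.smul_tmul']
        _ = (∑ g ∈ s, Coalgebra.counit (R := k) (m₁ g) • m₀ g) ⊗ₜ[k]
              (∑ e ∈ t, Coalgebra.counit (R := k) (n₁ e) • n₀ e) := by
            rw [TensorProduct.sum_tmul]
            exact Finset.sum_congr rfl fun g _ => by rw [TensorProduct.tmul_sum]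
        _ = m ⊗ₜ[k] n := by rw [hM4r, hN4r]
    | add u v hu hv => rw [map_add, map_add, map_add, hu, hv]
  · -- the Yetter-Drinfeld condition
    intro h x s t a b c x₀ x₁ hX hx
    have hbmul : ∀ x y : H, bL (x * y) = bL x * bL y := hβ.1
    have hbone : bL 1 = 1 := hβ.2.1
    have hcol : ∀ (x : H) (s : Finset ℕ) (p q : ℕ → H),
        Coalgebra.comul (R := k) x = ∑ i ∈ s, p i ⊗ₜ[k] q i →
        ∑ i ∈ s, SL (q i) * p i = (Coalgebra.counit (R := k) x) • (1 : H) :=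
      fun x s p q hx => YDAux.col1 Sinv hS1 hS2 hx
    have hKEY : ∀ (h : H) (x : M ⊗[k] N), coact₁ (act₁ h x)
        = YDAux.Ygad act₁ (aL ∘ₗ SL) cL
            (LinearMap.rTensor H (Coalgebra.comul (R := k)) (Coalgebra.comul (R := k) h))
            (coact₁ x) := by
      intro h x
      induction x using TensorProduct.induction_on with
      | zero => simp
      | tmul m n =>
        obtain ⟨sI, A, B, R1⟩ := YDAux.exists_rep (Coalgebra.comul (R := k) h)
        obtain ⟨GM, m₀, m₁, hm⟩ := YDAux.exists_rep (coactM m)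
        obtain ⟨GN, n₀, n₁, hn⟩ := YDAux.exists_rep (coactN n)
        have hL : coact₁ (act₁ h (m ⊗ₜ[k] n))
            = ∑ i ∈ sI, ∑ e ∈ GN, ∑ g ∈ GM,
                YDAux.Phic
                  (YDAux.Ygad actM (aL ∘ₗ SL) bL
                    (LinearMap.rTensor H (Coalgebra.comul (R := k))
                      (Coalgebra.comul (R := k) (A i))) (m₀ g ⊗ₜ[k] m₁ g))
                  (YDAux.Ygad actN (bL ∘ₗ SL) cL
                    (LinearMap.rTensor H (Coalgebra.comul (R := k))
                      (Coalgebra.comul (R := k) (B i))) (n₀ e ⊗ₜ[k] n₁ e)) := by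
          rw [hactpf h m n, R1]
          simp only [map_sum, TensorProduct.map_tmul, LinearMap.flip_apply, hcoactpf,
            hM5pt, hN5pt, hm, hn]
          simp only [map_sum, LinearMap.sum_apply]
        have hR : YDAux.Ygad act₁ (aL ∘ₗ SL) cL
              (LinearMap.rTensor H (Coalgebra.comul (R := k)) (Coalgebra.comul (R := k) h))
              (coact₁ (m ⊗ₜ[k] n))
            = ∑ e ∈ GN, ∑ g ∈ GM,
                YDAux.Ygad act₁ (aL ∘ₗ SL) cL
                  (LinearMap.rTensor H (Coalgebra.comul (R := k)) (Coalgebra.comul (R := k) h))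
                  ((m₀ g ⊗ₜ[k] n₀ e) ⊗ₜ[k] (n₁ e * m₁ g)) := by
          rw [hcoactpf m n, hm, hn]
          simp only [map_sum, LinearMap.sum_apply, YDAux.Phic_tmul]
        rw [hL, hR]
        calc ∑ i ∈ sI, ∑ e ∈ GN, ∑ g ∈ GM,
              YDAux.Phic
                  (YDAux.Ygad actM (aL ∘ₗ SL) bL
                    (LinearMap.rTensor H (Coalgebra.comul (R := k))
                      (Coalgebra.comul (R := k) (A i))) (m₀ g ⊗ₜ[k] m₁ g))
                  (YDAux.Ygad actN (bL ∘ₗ SL) cL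
                    (LinearMap.rTensor H (Coalgebra.comul (R := k))
                      (Coalgebra.comul (R := k) (B i))) (n₀ e ⊗ₜ[k] n₁ e))
            = ∑ e ∈ GN, ∑ i ∈ sI, ∑ g ∈ GM,
              YDAux.Phic
                  (YDAux.Ygad actM (aL ∘ₗ SL) bL
                    (LinearMap.rTensor H (Coalgebra.comul (R := k))
                      (Coalgebra.comul (R := k) (A i))) (m₀ g ⊗ₜ[k] m₁ g))
                  (YDAux.Ygad actN (bL ∘ₗ SL) cL
                    (LinearMap.rTensor H (Coalgebra.comul (R := k))
                      (Coalgebra.comul (R := k) (B i))) (n₀ e ⊗ₜ[k] n₁ e)) := Finset.sum_comm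
          _ = ∑ e ∈ GN, ∑ g ∈ GM, ∑ i ∈ sI,
              YDAux.Phic
                  (YDAux.Ygad actM (aL ∘ₗ SL) bL
                    (LinearMap.rTensor H (Coalgebra.comul (R := k))
                      (Coalgebra.comul (R := k) (A i))) (m₀ g ⊗ₜ[k] m₁ g))
                  (YDAux.Ygad actN (bL ∘ₗ SL) cL
                    (LinearMap.rTensor H (Coalgebra.comul (R := k))
                      (Coalgebra.comul (R := k) (B i))) (n₀ e ⊗ₜ[k] n₁ e)) :=
              Finset.sum_congr rfl fun e _ => Finset.sum_comm
          _ = ∑ e ∈ GN, ∑ g ∈ GM,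
                YDAux.Ygad act₁ (aL ∘ₗ SL) cL
                  (LinearMap.rTensor H (Coalgebra.comul (R := k)) (Coalgebra.comul (R := k) h))
                  ((m₀ g ⊗ₜ[k] n₀ e) ⊗ₜ[k] (n₁ e * m₁ g)) := by
              refine Finset.sum_congr rfl fun e _ => Finset.sum_congr rfl fun g _ => ?_
              exact YDAux.key2 actM actN act₁ SL aL bL cL hbmul hbone hcol hactpf
                (m₀ g) (m₁ g) (n₀ e) (n₁ e) h sI A B R1
      | add u v hu hv => simp only [map_add, hu, hv]
    rw [hKEY h x, hX, hx]
    simp only [map_sum, LinearMap.sum_apply, YDAux.Ygad_tmul, LinearMap.comp_apply]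
    rw [Finset.sum_comm]
    refine Finset.sum_congr rfl fun i _ => Finset.sum_congr rfl fun j _ => ?_
    rw [mul_assoc]
    simp only [hSLa, haLa, hcLa]


end
end

section
/- Let α, β, γ ∈ Aut_Hopf(H), let M be an (α,β)-Yetter-Drinfeld module and N a (γ,α)-Yetter-Drinfeld module. Then M ⊗ N, endowed with the left H-action h·(m⊗n) = h₂·m ⊗ h₁·n and the right H-coaction m⊗n ↦ (m₍₀₎ ⊗ n₍₀₎) ⊗ m₍₁₎n₍₁₎ (structures 'of type two'), is a (γ,β)-Yetter-Drinfeld module. -/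
open TensorProduct

noncomputable section
set_option maxHeartbeats 1000000
set_option synthInstance.maxHeartbeats 200000


open Coalgebra HopfAlgebra

namespace GYDAux

variable {k : Type} [Field k]

lemma exists_rep {P Q : Type} [AddCommGroup P] [Module k P] [AddCommGroup Q] [Module k Q]
    (x : P ⊗[k] Q) : ∃ (s : Finset ℕ) (p : ℕ → P) (q : ℕ → Q), x = ∑ i ∈ s, p i ⊗ₜ[k] q i := by
  induction x using TensorProduct.induction_on with
  | zero => exact ⟨∅, 0, 0, by simp⟩
  | tmul p q => exact ⟨{0}, fun _ => p, fun _ => q, by simp⟩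
  | add x y hx hy =>
    obtain ⟨s, p, q, hs⟩ := hx
    obtain ⟨t, p', q', ht⟩ := hy
    refine ⟨s.image (2 * ·) ∪ t.image (2 * · + 1),
      fun i => if Even i then p (i / 2) else p' (i / 2),
      fun i => if Even i then q (i / 2) else q' (i / 2), ?_⟩
    rw [Finset.sum_union]
    · rw [Finset.sum_image (by exact fun a _ b _ (h : 2 * a = 2 * b) => by omega), Finset.sum_image (by exact fun a _ b _ (h : 2 * a + 1 = 2 * b + 1) => by omega)]
      simp only [hs, ht]
      congr 1
      · apply Finset.sum_congr rfl
        intro i _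
        have h1 : Even (2 * i) := ⟨i, by ring⟩
        simp [h1, Nat.mul_div_cancel_left]
      · apply Finset.sum_congr rfl
        intro i _
        have h1 : ¬ Even (2 * i + 1) := by simp [Nat.even_add_one, parity_simps]
        simp only [h1, if_false]
        congr 2 <;> omega
    · simp only [Finset.disjoint_left, Finset.mem_image]
      rintro a ⟨i, _, rfl⟩ ⟨j, _, hj⟩
      omega

lemma pair_reindex {A : Type} [AddCommMonoid A] (s : Finset ℕ) (t : ℕ → Finset ℕ)
    (F : ℕ → ℕ → A) :
    ∑ l ∈ (s.sigma t).image (fun x => Nat.pair x.1 x.2),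
        F (Nat.unpair l).1 (Nat.unpair l).2 = ∑ i ∈ s, ∑ j ∈ t i, F i j := by
  rw [Finset.sum_image]
  · rw [Finset.sum_sigma]
    exact Finset.sum_congr rfl fun x _ => by simp
  · rintro ⟨a, b⟩ _ ⟨c, d⟩ _ h
    have := congrArg Nat.unpair h
    simp only [Nat.unpair_pair] at this
    cases this
    rfl

lemma exists_rep₃ {P Q R : Type} [AddCommGroup P] [Module k P] [AddCommGroup Q] [Module k Q]
    [AddCommGroup R] [Module k R] (x : (P ⊗[k] Q) ⊗[k] R) :
    ∃ (s : Finset ℕ) (a : ℕ → P) (b : ℕ → Q) (c : ℕ → R),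
      x = ∑ i ∈ s, (a i ⊗ₜ[k] b i) ⊗ₜ[k] c i := by
  obtain ⟨s, y, c, h⟩ := exists_rep (k := k) x
  choose t a b hy using fun i => exists_rep (k := k) (y i)
  refine ⟨(s.sigma t).image (fun z => Nat.pair z.1 z.2),
    fun l => a (Nat.unpair l).1 (Nat.unpair l).2,
    fun l => b (Nat.unpair l).1 (Nat.unpair l).2,
    fun l => c (Nat.unpair l).1, ?_⟩
  rw [pair_reindex s t (fun i j => (a i j ⊗ₜ[k] b i j) ⊗ₜ[k] c i), h]
  exact Finset.sum_congr rfl fun i _ => by rw [hy i, TensorProduct.sum_tmul]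


variable {k H : Type} [Field k] [Ring H] [HopfAlgebra k H]

local notation "Δ" => Coalgebra.comul (R := k)
local notation "ε" => Coalgebra.counit (R := k)
local notation "S" => HopfAlgebra.antipode (R := k)

lemma sum_S_mul {h : H} {ι : Type} {s : Finset ι} {x y : ι → H}
    (hrep : Δ h = ∑ i ∈ s, x i ⊗ₜ[k] y i) :
    ∑ i ∈ s, S (x i) * y i = ε h • (1 : H) := by
  have := mul_antipode_rTensor_comul_apply (R := k) h
  rw [hrep, map_sum, map_sum] at this
  simpa [Algebra.smul_def] using this

lemma sum_mul_S {h : H} {ι : Type} {s : Finset ι} {x y : ι → H}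
    (hrep : Δ h = ∑ i ∈ s, x i ⊗ₜ[k] y i) :
    ∑ i ∈ s, x i * S (y i) = ε h • (1 : H) := by
  have := mul_antipode_lTensor_comul_apply (R := k) h
  rw [hrep, map_sum, map_sum] at this
  simpa [Algebra.smul_def] using this

lemma sum_counit_smul {h : H} {ι : Type} {s : Finset ι} {x y : ι → H}
    (hrep : Δ h = ∑ i ∈ s, x i ⊗ₜ[k] y i) :
    ∑ i ∈ s, ε (x i) • y i = h := by
  have := Coalgebra.rTensor_counit_comul (R := k) h
  rw [hrep, map_sum] at this
  have := congrArg (TensorProduct.lid k H) this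
  simpa [map_sum] using this

lemma sum_smul_counit {h : H} {ι : Type} {s : Finset ι} {x y : ι → H}
    (hrep : Δ h = ∑ i ∈ s, x i ⊗ₜ[k] y i) :
    ∑ i ∈ s, ε (y i) • x i = h := by
  have := Coalgebra.lTensor_counit_comul (R := k) h
  rw [hrep, map_sum] at this
  have := congrArg (TensorProduct.rid k H) this
  simpa [map_sum] using this

lemma antipode_one : S (1 : H) = 1 := by
  have := mul_antipode_rTensor_comul_apply (R := k) (1 : H)
  simpa [Algebra.TensorProduct.one_def] using this


/-- `∑ (a₁ b₁) S(a₂ b₂) = ε(a)ε(b) 1`. -/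
lemma sum_mul_S_mul {a b : H} {ι κ : Type} {s : Finset ι} {t : Finset κ}
    {a1 a2 : ι → H} {b1 b2 : κ → H}
    (ha : Δ a = ∑ i ∈ s, a1 i ⊗ₜ[k] a2 i) (hb : Δ b = ∑ j ∈ t, b1 j ⊗ₜ[k] b2 j) :
    ∑ i ∈ s, ∑ j ∈ t, (a1 i * b1 j) * S (a2 i * b2 j) = (ε a * ε b) • (1 : H) := by
  have hab : Δ (a * b) = ∑ x ∈ s ×ˢ t, (a1 x.1 * b1 x.2) ⊗ₜ[k] (a2 x.1 * b2 x.2) := by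
    rw [Bialgebra.comul_mul, ha, hb, Finset.sum_mul_sum]
    rw [Finset.sum_product]
    exact Finset.sum_congr rfl fun i _ => Finset.sum_congr rfl fun j _ => by
      simp [Algebra.TensorProduct.tmul_mul_tmul]
  have := sum_mul_S (k := k) hab
  rw [Finset.sum_product] at this
  rw [this, Bialgebra.counit_mul]

/-- `∑ S(b₁) S(a₁) (a₂ b₂) = ε(a)ε(b) 1`. -/
lemma sum_S_S_mul {a b : H} {ι κ : Type} {s : Finset ι} {t : Finset κ}
    {a1 a2 : ι → H} {b1 b2 : κ → H}
    (ha : Δ a = ∑ i ∈ s, a1 i ⊗ₜ[k] a2 i) (hb : Δ b = ∑ j ∈ t, b1 j ⊗ₜ[k] b2 j) :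
    ∑ i ∈ s, ∑ j ∈ t, S (b1 j) * S (a1 i) * a2 i * b2 j = (ε a * ε b) • (1 : H) := by
  rw [Finset.sum_comm]
  have : ∀ j ∈ t, ∑ i ∈ s, S (b1 j) * S (a1 i) * a2 i * b2 j
      = ε a • (S (b1 j) * b2 j) := by
    intro j _
    have : ∀ i ∈ s, S (b1 j) * S (a1 i) * a2 i * b2 j
        = S (b1 j) * (S (a1 i) * a2 i) * b2 j := by intros; simp only [mul_assoc]
    rw [Finset.sum_congr rfl this]
    rw [show ∑ i ∈ s, S (b1 j) * (S (a1 i) * a2 i) * b2 j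
        = S (b1 j) * (∑ i ∈ s, S (a1 i) * a2 i) * b2 j by
      rw [Finset.mul_sum, Finset.sum_mul]]
    rw [sum_S_mul (k := k) ha]
    simp [mul_smul_comm, smul_mul_assoc]
  rw [Finset.sum_congr rfl this, ← Finset.smul_sum, sum_S_mul (k := k) hb]
  rw [smul_smul]

/-- The 6-ary gadget used in proving anti-multiplicativity of the antipode. -/
def gam : ((H ⊗[k] (H ⊗[k] H)) ⊗[k] (H ⊗[k] (H ⊗[k] H))) →ₗ[k] H :=
  (LinearMap.mul' k H ∘ₗ LinearMap.lTensor H (LinearMap.mul' k H)) ∘ₗ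
  TensorProduct.map
    (LinearMap.mul' k H ∘ₗ TensorProduct.map
      (HopfAlgebra.antipode (R := k)) (HopfAlgebra.antipode (R := k)))
    (TensorProduct.map (LinearMap.mul' k H)
      ((HopfAlgebra.antipode (R := k)) ∘ₗ LinearMap.mul' k H)) ∘ₗ
  (TensorProduct.congr (TensorProduct.comm k H H)
    (tensorTensorTensorComm k H H H H)).toLinearMap ∘ₗ
  (tensorTensorTensorComm k H (H ⊗[k] H) H (H ⊗[k] H)).toLinearMap

@[simp] lemma gam_tmul (x y z u v w : H) :
    gam ((x ⊗ₜ[k] (y ⊗ₜ[k] z)) ⊗ₜ[k] (u ⊗ₜ[k] (v ⊗ₜ[k] w)))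
      = (S u * S x) * ((y * v) * S (z * w)) := by
  simp [gam, tensorTensorTensorComm_tmul]

lemma antipode_mul (a b : H) : S (a * b) = S b * S a := by
  obtain ⟨sa, a1, a2, ha⟩ := exists_rep (k := k) (Δ a)
  obtain ⟨sb, b1, b2, hb⟩ := exists_rep (k := k) (Δ b)
  choose ta a21 a22 ha2 using fun i : ℕ => exists_rep (k := k) (Δ (a2 i))
  choose ua a11 a12 ha1 using fun i : ℕ => exists_rep (k := k) (Δ (a1 i))
  choose tb b21 b22 hb2 using fun i : ℕ => exists_rep (k := k) (Δ (b2 i))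
  choose ub b11 b12 hb1 using fun i : ℕ => exists_rep (k := k) (Δ (b1 i))
  have hXa1 : LinearMap.lTensor H Δ (Δ a)
      = ∑ i ∈ sa, ∑ j ∈ ta i, a1 i ⊗ₜ[k] (a21 i j ⊗ₜ[k] a22 i j) := by
    rw [ha, map_sum]
    exact Finset.sum_congr rfl fun i _ => by
      rw [LinearMap.lTensor_tmul, ha2 i, tmul_sum]
  have hXb1 : LinearMap.lTensor H Δ (Δ b)
      = ∑ i ∈ sb, ∑ j ∈ tb i, b1 i ⊗ₜ[k] (b21 i j ⊗ₜ[k] b22 i j) := by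
    rw [hb, map_sum]
    exact Finset.sum_congr rfl fun i _ => by
      rw [LinearMap.lTensor_tmul, hb2 i, tmul_sum]
  have hXa2 : LinearMap.lTensor H Δ (Δ a)
      = ∑ i ∈ sa, ∑ j ∈ ua i, a11 i j ⊗ₜ[k] (a12 i j ⊗ₜ[k] a2 i) := by
    rw [← Coalgebra.coassoc_apply]
    have hra : LinearMap.rTensor H Δ (Δ a)
        = ∑ i ∈ sa, ∑ j ∈ ua i, (a11 i j ⊗ₜ[k] a12 i j) ⊗ₜ[k] a2 i := by
      rw [ha, map_sum]
      exact Finset.sum_congr rfl fun i _ => by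
        rw [LinearMap.rTensor_tmul, ha1 i, sum_tmul]
    rw [hra, map_sum]
    exact Finset.sum_congr rfl fun i _ => by
      rw [map_sum]
      exact Finset.sum_congr rfl fun j _ => by rw [assoc_tmul]
  have hXb2 : LinearMap.lTensor H Δ (Δ b)
      = ∑ i ∈ sb, ∑ j ∈ ub i, b11 i j ⊗ₜ[k] (b12 i j ⊗ₜ[k] b2 i) := by
    rw [← Coalgebra.coassoc_apply]
    have hrb : LinearMap.rTensor H Δ (Δ b)
        = ∑ i ∈ sb, ∑ j ∈ ub i, (b11 i j ⊗ₜ[k] b12 i j) ⊗ₜ[k] b2 i := by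
      rw [hb, map_sum]
      exact Finset.sum_congr rfl fun i _ => by
        rw [LinearMap.rTensor_tmul, hb1 i, sum_tmul]
    rw [hrb, map_sum]
    exact Finset.sum_congr rfl fun i _ => by
      rw [map_sum]
      exact Finset.sum_congr rfl fun j _ => by rw [assoc_tmul]
  have hSb : ∑ p ∈ sb, ε (b2 p) • S (b1 p) = S b := by
    simp_rw [← map_smul, ← map_sum]
    rw [sum_smul_counit (k := k) hb]
  have hSa : ∑ i ∈ sa, ε (a2 i) • S (a1 i) = S a := by
    simp_rw [← map_smul, ← map_sum]
    rw [sum_smul_counit (k := k) ha]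
  have E1 : gam ((LinearMap.lTensor H Δ (Δ a)) ⊗ₜ[k] (LinearMap.lTensor H Δ (Δ b)))
      = S b * S a := by
    rw [hXa1, hXb1]
    simp only [sum_tmul, tmul_sum, map_sum, gam_tmul]
    calc ∑ p ∈ sb, ∑ q ∈ tb p, ∑ i ∈ sa, ∑ j ∈ ta i,
          (S (b1 p) * S (a1 i)) * ((a21 i j * b21 p q) * S (a22 i j * b22 p q))
        = ∑ p ∈ sb, ∑ i ∈ sa, (ε (a2 i) * ε (b2 p)) • (S (b1 p) * S (a1 i)) := by
          refine Finset.sum_congr rfl fun p _ => ?_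
          rw [Finset.sum_comm]
          refine Finset.sum_congr rfl fun i _ => ?_
          rw [Finset.sum_comm]
          simp_rw [← Finset.mul_sum]
          rw [sum_mul_S_mul (k := k) (ha2 i) (hb2 p), mul_smul_comm, mul_one]
      _ = (∑ p ∈ sb, ε (b2 p) • S (b1 p)) * (∑ i ∈ sa, ε (a2 i) • S (a1 i)) := by
          rw [Finset.sum_mul_sum]
          refine Finset.sum_congr rfl fun p _ => Finset.sum_congr rfl fun i _ => ?_
          rw [smul_mul_smul_comm,
            mul_comm (Coalgebra.counit (R := k) (b2 p)) (Coalgebra.counit (R := k) (a2 i))]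
      _ = S b * S a := by rw [hSb, hSa]
  have E2 : gam ((LinearMap.lTensor H Δ (Δ a)) ⊗ₜ[k] (LinearMap.lTensor H Δ (Δ b)))
      = S (a * b) := by
    rw [hXa2, hXb2]
    simp only [sum_tmul, tmul_sum, map_sum, gam_tmul]
    have key : ∀ i ∈ sa, ∀ p ∈ sb,
        ∑ j ∈ ua i, ∑ q ∈ ub p,
          (S (b11 p q) * S (a11 i j)) * ((a12 i j * b12 p q) * S (a2 i * b2 p))
        = (ε (a1 i) * ε (b1 p)) • S (a2 i * b2 p) := by
      intro i _ p _
      have : ∀ j ∈ ua i, ∑ q ∈ ub p,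
          (S (b11 p q) * S (a11 i j)) * ((a12 i j * b12 p q) * S (a2 i * b2 p))
          = (∑ q ∈ ub p, S (b11 p q) * S (a11 i j) * a12 i j * b12 p q) * S (a2 i * b2 p) := by
        intro j _
        rw [Finset.sum_mul]
        exact Finset.sum_congr rfl fun q _ => by simp only [mul_assoc]
      rw [Finset.sum_congr rfl this, ← Finset.sum_mul]
      rw [sum_S_S_mul (k := k) (ha1 i) (hb1 p), smul_mul_assoc, one_mul]
    calc ∑ p ∈ sb, ∑ q ∈ ub p, ∑ i ∈ sa, ∑ j ∈ ua i,
          (S (b11 p q) * S (a11 i j)) * ((a12 i j * b12 p q) * S (a2 i * b2 p))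
        = ∑ p ∈ sb, ∑ i ∈ sa, (ε (a1 i) * ε (b1 p)) • S (a2 i * b2 p) := by
          refine Finset.sum_congr rfl fun p hp => ?_
          rw [Finset.sum_comm]
          refine Finset.sum_congr rfl fun i hi => ?_
          rw [Finset.sum_comm]
          exact key i hi p hp
      _ = S ((∑ i ∈ sa, ε (a1 i) • a2 i) * (∑ p ∈ sb, ε (b1 p) • b2 p)) := by
          rw [Finset.sum_mul_sum, map_sum, Finset.sum_comm]
          refine Finset.sum_congr rfl fun p _ => ?_
          rw [map_sum]
          refine Finset.sum_congr rfl fun i _ => ?_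
          rw [smul_mul_smul_comm, map_smul]
      _ = S (a * b) := by rw [sum_counit_smul (k := k) ha, sum_counit_smul (k := k) hb]
  rw [← E2, E1]


lemma Sinv_one {Sinv : H → H} (hS1 : ∀ h : H, S (Sinv h) = h)
    (hS2 : ∀ h : H, Sinv (S h) = h) : Sinv (1 : H) = 1 := by
  conv_lhs => rw [← antipode_one (k := k)]
  rw [hS2]

lemma Sinv_mul {Sinv : H → H} (hS1 : ∀ h : H, S (Sinv h) = h)
    (hS2 : ∀ h : H, Sinv (S h) = h) (a b : H) : Sinv (a * b) = Sinv b * Sinv a := by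
  have h1 : S (Sinv b * Sinv a) = a * b := by
    rw [antipode_mul, hS1, hS1]
  rw [← h1, hS2]

lemma Sinv_add {Sinv : H → H} (hS1 : ∀ h : H, S (Sinv h) = h)
    (hS2 : ∀ h : H, Sinv (S h) = h) (x y : H) : Sinv (x + y) = Sinv x + Sinv y := by
  have hinj : Function.Injective (S : H → H) := Function.LeftInverse.injective hS2
  apply hinj
  rw [map_add, hS1, hS1, hS1]

lemma Sinv_smul {Sinv : H → H} (hS1 : ∀ h : H, S (Sinv h) = h)
    (hS2 : ∀ h : H, Sinv (S h) = h) (c : k) (x : H) : Sinv (c • x) = c • Sinv x := by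
  have hinj : Function.Injective (S : H → H) := Function.LeftInverse.injective hS2
  apply hinj
  rw [map_smul, hS1, hS1]

/-- The inverse of the antipode bundled as a linear map. -/
def sinvL {Sinv : H → H} (hS1 : ∀ h : H, S (Sinv h) = h)
    (hS2 : ∀ h : H, Sinv (S h) = h) : H →ₗ[k] H where
  toFun := Sinv
  map_add' := Sinv_add hS1 hS2
  map_smul' := Sinv_smul hS1 hS2

@[simp] lemma sinvL_apply {Sinv : H → H} (hS1 : ∀ h : H, S (Sinv h) = h)
    (hS2 : ∀ h : H, Sinv (S h) = h) (h : H) : sinvL (k := k) hS1 hS2 h = Sinv h := rfl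

/-- The crucial identity `∑ S⁻¹(h₂) h₁ = ε(h) 1`. -/
lemma sum_Sinv_mul {Sinv : H → H} (hS1 : ∀ h : H, S (Sinv h) = h)
    (hS2 : ∀ h : H, Sinv (S h) = h) {h : H} {ι : Type} {s : Finset ι} {x y : ι → H}
    (hrep : Δ h = ∑ i ∈ s, x i ⊗ₜ[k] y i) :
    ∑ i ∈ s, Sinv (y i) * x i = ε h • (1 : H) := by
  have h1 := sum_S_mul (k := k) hrep
  have h2 := congrArg (sinvL (k := k) hS1 hS2) h1
  rw [map_sum, map_smul] at h2
  simp only [sinvL_apply] at h2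
  rw [Sinv_one hS1 hS2] at h2
  calc ∑ i ∈ s, Sinv (y i) * x i
      = ∑ i ∈ s, Sinv (S (x i) * y i) := by
        refine Finset.sum_congr rfl fun i _ => ?_
        rw [Sinv_mul hS1 hS2, hS2]
    _ = ε h • (1 : H) := h2


section Core
variable {Sinv : H → H}

/-- `colR (x ⊗ y) = Sinv y * x`. -/
def colR (hS1 : ∀ h : H, S (Sinv h) = h) (hS2 : ∀ h : H, Sinv (S h) = h) :
    H ⊗[k] H →ₗ[k] H :=
  LinearMap.mul' k H ∘ₗ TensorProduct.map (sinvL (k := k) hS1 hS2) LinearMap.id ∘ₗ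
    (TensorProduct.comm k H H).toLinearMap

@[simp] lemma colR_tmul (hS1 : ∀ h : H, S (Sinv h) = h) (hS2 : ∀ h : H, Sinv (S h) = h)
    (x y : H) : colR (k := k) hS1 hS2 (x ⊗ₜ[k] y) = Sinv y * x := by
  simp [colR]

/-- `lamS (z ⊗ ((y₁ ⊗ y₂) ⊗ y₃)) = (Sinv y₁ * z) ⊗ (y₂ ⊗ y₃)`. -/
def lamS (hS1 : ∀ h : H, S (Sinv h) = h) (hS2 : ∀ h : H, Sinv (S h) = h) :
    H ⊗[k] ((H ⊗[k] H) ⊗[k] H) →ₗ[k] H ⊗[k] (H ⊗[k] H) :=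
  TensorProduct.map (colR (k := k) hS1 hS2) LinearMap.id ∘ₗ
  (TensorProduct.assoc k H H (H ⊗[k] H)).symm.toLinearMap ∘ₗ
  LinearMap.lTensor H (TensorProduct.assoc k H H H).toLinearMap

@[simp] lemma lamS_tmul (hS1 : ∀ h : H, S (Sinv h) = h) (hS2 : ∀ h : H, Sinv (S h) = h)
    (z y₁ y₂ y₃ : H) :
    lamS (k := k) hS1 hS2 (z ⊗ₜ[k] ((y₁ ⊗ₜ[k] y₂) ⊗ₜ[k] y₃))
      = (Sinv y₁ * z) ⊗ₜ[k] (y₂ ⊗ₜ[k] y₃) := by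
  simp [lamS]

/-- `kmap (((x₁⊗x₂)⊗x₃) ⊗ ((y₁⊗y₂)⊗y₃)) = ((x₁⊗x₂)⊗(Sinv y₁ * x₃)) ⊗ (y₂⊗y₃)`. -/
def kmap (hS1 : ∀ h : H, S (Sinv h) = h) (hS2 : ∀ h : H, Sinv (S h) = h) :
    ((H ⊗[k] H) ⊗[k] H) ⊗[k] ((H ⊗[k] H) ⊗[k] H) →ₗ[k]
      ((H ⊗[k] H) ⊗[k] H) ⊗[k] (H ⊗[k] H) :=
  (TensorProduct.assoc k (H ⊗[k] H) H (H ⊗[k] H)).symm.toLinearMap ∘ₗ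
  LinearMap.lTensor (H ⊗[k] H) (lamS (k := k) hS1 hS2) ∘ₗ
  (TensorProduct.assoc k (H ⊗[k] H) H ((H ⊗[k] H) ⊗[k] H)).toLinearMap

lemma kmap_factor (hS1 : ∀ h : H, S (Sinv h) = h) (hS2 : ∀ h : H, Sinv (S h) = h)
    (A : H ⊗[k] H) (z : H) (B : (H ⊗[k] H) ⊗[k] H) :
    kmap (k := k) hS1 hS2 ((A ⊗ₜ[k] z) ⊗ₜ[k] B)
      = (TensorProduct.assoc k (H ⊗[k] H) H (H ⊗[k] H)).symm
          (A ⊗ₜ[k] lamS (k := k) hS1 hS2 (z ⊗ₜ[k] B)) := by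
  simp [kmap]

@[simp] lemma kmap_tmul (hS1 : ∀ h : H, S (Sinv h) = h) (hS2 : ∀ h : H, Sinv (S h) = h)
    (x₁ x₂ x₃ y₁ y₂ y₃ : H) :
    kmap (k := k) hS1 hS2 (((x₁ ⊗ₜ[k] x₂) ⊗ₜ[k] x₃) ⊗ₜ[k] ((y₁ ⊗ₜ[k] y₂) ⊗ₜ[k] y₃))
      = ((x₁ ⊗ₜ[k] x₂) ⊗ₜ[k] (Sinv y₁ * x₃)) ⊗ₜ[k] (y₂ ⊗ₜ[k] y₃) := by
  simp [kmap]

/-- The balanced-tree form of the four-fold comultiplication. -/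
lemma tree4 (g : H) :
    (TensorProduct.assoc k H H (H ⊗[k] H)).symm.toLinearMap
      (LinearMap.lTensor H (TensorProduct.assoc k H H H).toLinearMap
        (LinearMap.lTensor H (LinearMap.rTensor H Δ ∘ₗ Δ) (Δ g)))
      = TensorProduct.map Δ Δ (Δ g) := by
  obtain ⟨s, p, q, hg⟩ := exists_rep (k := k) (Δ g)
  choose t q1 q2 hq using fun i : ℕ => exists_rep (k := k) (Δ (q i))
  have hrhs : TensorProduct.map Δ Δ (Δ g)
      = ∑ i ∈ s, ∑ j ∈ t i, (p i ⊗ₜ[k] q1 i j) ⊗ₜ[k] Δ (q2 i j) := by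
    have h1 : TensorProduct.map Δ Δ (Δ g)
        = LinearMap.lTensor (H ⊗[k] H) Δ (LinearMap.rTensor H Δ (Δ g)) := by
      conv_rhs => rw [← LinearMap.comp_apply, LinearMap.lTensor_comp_rTensor]
    have h2 : LinearMap.rTensor H Δ (Δ g)
        = ∑ i ∈ s, ∑ j ∈ t i, (p i ⊗ₜ[k] q1 i j) ⊗ₜ[k] q2 i j := by
      rw [← Coalgebra.coassoc_symm_apply, hg, map_sum, map_sum]
      refine Finset.sum_congr rfl fun i _ => ?_
      rw [LinearMap.lTensor_tmul, hq i, tmul_sum, map_sum]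
      exact Finset.sum_congr rfl fun j _ => by rw [assoc_symm_tmul]
    rw [h1, h2, map_sum]
    exact Finset.sum_congr rfl fun i _ => by
      rw [map_sum]
      exact Finset.sum_congr rfl fun j _ => by rw [LinearMap.lTensor_tmul]
  rw [hrhs, hg, map_sum, map_sum, map_sum]
  refine Finset.sum_congr rfl fun i _ => ?_
  rw [LinearMap.lTensor_tmul, LinearMap.lTensor_tmul, LinearMap.comp_apply]
  rw [show (TensorProduct.assoc k H H H).toLinearMap
        (LinearMap.rTensor H Δ (Δ (q i))) = LinearMap.lTensor H Δ (Δ (q i)) from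
    Coalgebra.coassoc_apply (q i)]
  rw [hq i, map_sum]
  rw [Finset.sum_congr rfl fun j (_ : j ∈ t i) => LinearMap.lTensor_tmul H Δ (q1 i j) (q2 i j)]
  rw [tmul_sum, map_sum]
  exact Finset.sum_congr rfl fun j _ => by simp

/-- The key collapse: `lamS ((id ⊗ (Δ⊗id)Δ)(Δ g)) = 1 ⊗ Δ g`. -/
lemma collapse (hS1 : ∀ h : H, S (Sinv h) = h) (hS2 : ∀ h : H, Sinv (S h) = h) (g : H) :
    lamS (k := k) hS1 hS2
        (LinearMap.lTensor H (LinearMap.rTensor H Δ ∘ₗ Δ) (Δ g))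
      = (1 : H) ⊗ₜ[k] (Δ g) := by
  have h1 : lamS (k := k) hS1 hS2
        (LinearMap.lTensor H (LinearMap.rTensor H Δ ∘ₗ Δ) (Δ g))
      = TensorProduct.map (colR (k := k) hS1 hS2) LinearMap.id
          (TensorProduct.map Δ Δ (Δ g)) := by
    rw [← tree4 (k := k) g]
    simp [lamS]
  rw [h1]
  obtain ⟨s, p, q, hg⟩ := exists_rep (k := k) (Δ g)
  have h2 : TensorProduct.map (colR (k := k) hS1 hS2) LinearMap.id
      (TensorProduct.map Δ Δ (Δ g))
      = ∑ i ∈ s, ε (p i) • ((1 : H) ⊗ₜ[k] Δ (q i)) := by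
    rw [hg, map_sum, map_sum]
    refine Finset.sum_congr rfl fun i _ => ?_
    rw [map_tmul, map_tmul]
    have hc : colR (k := k) hS1 hS2 (Δ (p i)) = ε (p i) • (1 : H) := by
      obtain ⟨t, x, y, hx⟩ := exists_rep (k := k) (Δ (p i))
      rw [hx, map_sum]
      rw [Finset.sum_congr rfl fun j _ => colR_tmul (k := k) hS1 hS2 (x j) (y j)]
      exact sum_Sinv_mul (k := k) hS1 hS2 hx
    rw [hc]
    simp [smul_tmul']
  rw [h2]
  have h3 : ∑ i ∈ s, ε (p i) • ((1 : H) ⊗ₜ[k] Δ (q i))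
      = (1 : H) ⊗ₜ[k] Δ (∑ i ∈ s, ε (p i) • q i) := by
    rw [map_sum, tmul_sum]
    refine Finset.sum_congr rfl fun i _ => ?_
    rw [map_smul, tmul_smul]
  rw [h3, sum_counit_smul (k := k) hg]

/-- `STAR1`. -/
lemma star1 (hS1 : ∀ h : H, S (Sinv h) = h) (hS2 : ∀ h : H, Sinv (S h) = h) (x g : H) :
    kmap (k := k) hS1 hS2
      (TensorProduct.map (LinearMap.rTensor H Δ) (LinearMap.rTensor H Δ ∘ₗ Δ)
        ((TensorProduct.assoc k H H H).symm (x ⊗ₜ[k] Δ g)))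
      = ((Δ x) ⊗ₜ[k] (1 : H)) ⊗ₜ[k] (Δ g) := by
  obtain ⟨s, c1, c2, hg⟩ := exists_rep (k := k) (Δ g)
  have h1 : (TensorProduct.assoc k H H H).symm (x ⊗ₜ[k] Δ g)
      = ∑ v ∈ s, (x ⊗ₜ[k] c1 v) ⊗ₜ[k] c2 v := by
    rw [hg, tmul_sum, map_sum]
    exact Finset.sum_congr rfl fun v _ => by rw [assoc_symm_tmul]
  rw [h1, map_sum, map_sum]
  have h2 : ∀ v ∈ s,
      kmap (k := k) hS1 hS2
        (TensorProduct.map (LinearMap.rTensor H Δ) (LinearMap.rTensor H Δ ∘ₗ Δ)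
          ((x ⊗ₜ[k] c1 v) ⊗ₜ[k] c2 v))
      = (TensorProduct.assoc k (H ⊗[k] H) H (H ⊗[k] H)).symm
          ((Δ x) ⊗ₜ[k] lamS (k := k) hS1 hS2
            (c1 v ⊗ₜ[k] ((LinearMap.rTensor H Δ ∘ₗ Δ) (c2 v)))) := by
    intro v _
    rw [map_tmul, LinearMap.rTensor_tmul]
    exact kmap_factor (k := k) hS1 hS2 (Δ x) (c1 v) _
  rw [Finset.sum_congr rfl h2]
  have h3 : ∑ v ∈ s, (TensorProduct.assoc k (H ⊗[k] H) H (H ⊗[k] H)).symm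
        ((Δ x) ⊗ₜ[k] lamS (k := k) hS1 hS2
          (c1 v ⊗ₜ[k] ((LinearMap.rTensor H Δ ∘ₗ Δ) (c2 v))))
      = (TensorProduct.assoc k (H ⊗[k] H) H (H ⊗[k] H)).symm
          ((Δ x) ⊗ₜ[k] lamS (k := k) hS1 hS2
            (LinearMap.lTensor H (LinearMap.rTensor H Δ ∘ₗ Δ) (Δ g))) := by
    have h4 : LinearMap.lTensor H (LinearMap.rTensor H Δ ∘ₗ Δ) (Δ g)
        = ∑ v ∈ s, c1 v ⊗ₜ[k] ((LinearMap.rTensor H Δ ∘ₗ Δ) (c2 v)) := by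
      rw [hg, map_sum]
      exact Finset.sum_congr rfl fun v _ => by rw [LinearMap.lTensor_tmul]
    rw [h4, map_sum, tmul_sum, map_sum]
  rw [h3, collapse (k := k) hS1 hS2 g, assoc_symm_tmul]

/-- `STAR`: the main Hopf-algebraic identity. -/
lemma star (hS1 : ∀ h : H, S (Sinv h) = h) (hS2 : ∀ h : H, Sinv (S h) = h) (h : H) :
    kmap (k := k) hS1 hS2
      (TensorProduct.map (LinearMap.rTensor H Δ ∘ₗ Δ) (LinearMap.rTensor H Δ ∘ₗ Δ) (Δ h))
      = TensorProduct.map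
          (((TensorProduct.mk k (H ⊗[k] H) H).flip 1) ∘ₗ Δ) Δ (Δ h) := by
  obtain ⟨s, h1, h2, hh⟩ := exists_rep (k := k) (Δ h)
  have e0 : TensorProduct.map (LinearMap.rTensor H Δ ∘ₗ Δ)
        (LinearMap.rTensor H Δ ∘ₗ Δ) (Δ h)
      = TensorProduct.map (LinearMap.rTensor H Δ) (LinearMap.rTensor H Δ ∘ₗ Δ)
          (LinearMap.rTensor H Δ (Δ h)) := by
    conv_rhs => rw [show LinearMap.rTensor H Δ (Δ h)
        = TensorProduct.map Δ LinearMap.id (Δ h) from rfl,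
      ← LinearMap.comp_apply, ← TensorProduct.map_comp, LinearMap.comp_id]
  rw [e0]
  rw [show LinearMap.rTensor H Δ (Δ h)
      = (TensorProduct.assoc k H H H).symm (LinearMap.lTensor H Δ (Δ h)) from
    (Coalgebra.coassoc_symm_apply h).symm]
  have e1 : LinearMap.lTensor H Δ (Δ h) = ∑ i ∈ s, h1 i ⊗ₜ[k] Δ (h2 i) := by
    rw [hh, map_sum]
    exact Finset.sum_congr rfl fun i _ => by rw [LinearMap.lTensor_tmul]
  rw [e1, map_sum, map_sum, map_sum]
  rw [Finset.sum_congr rfl fun i (_ : i ∈ s) => star1 (k := k) hS1 hS2 (h1 i) (h2 i)]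
  rw [hh, map_sum]
  refine Finset.sum_congr rfl fun i _ => ?_
  rw [map_tmul]
  rfl

end Core


section Mod
variable {M N W : Type} [AddCommGroup M] [Module k M] [AddCommGroup N] [Module k N]
  [AddCommGroup W] [Module k W]

/-- `fco ((m₀⊗m₁) ⊗ (n₀⊗n₁)) = (m₀⊗n₀) ⊗ (m₁ * n₁)`. -/
def fco : (M ⊗[k] H) ⊗[k] (N ⊗[k] H) →ₗ[k] (M ⊗[k] N) ⊗[k] H :=
  LinearMap.lTensor (M ⊗[k] N) (LinearMap.mul' k H) ∘ₗ
    (tensorTensorTensorComm k M H N H).toLinearMap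

@[simp] lemma fco_tmul (m₀ : M) (m₁ : H) (n₀ : N) (n₁ : H) :
    fco (k := k) ((m₀ ⊗ₜ[k] m₁) ⊗ₜ[k] (n₀ ⊗ₜ[k] n₁)) = (m₀ ⊗ₜ[k] n₀) ⊗ₜ[k] (m₁ * n₁) := by
  simp [fco]

/-- `theta act f g (((a⊗b)⊗c) ⊗ (w⊗x)) = act b w ⊗ (g c * x * f a)`. -/
def theta (act : H →ₗ[k] W →ₗ[k] W) (f g : H →ₗ[k] H) :
    ((H ⊗[k] H) ⊗[k] H) ⊗[k] (W ⊗[k] H) →ₗ[k] W ⊗[k] H :=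
  LinearMap.lTensor W (LinearMap.mul' k H) ∘ₗ
  LinearMap.lTensor W (TensorProduct.comm k H H).toLinearMap ∘ₗ
  (TensorProduct.assoc k W H H).toLinearMap ∘ₗ
  TensorProduct.map
    ((TensorProduct.comm k H W).toLinearMap ∘ₗ
      TensorProduct.map f (TensorProduct.lift act) ∘ₗ
      (TensorProduct.assoc k H H W).toLinearMap)
    (LinearMap.mul' k H ∘ₗ TensorProduct.map g LinearMap.id) ∘ₗ
  (tensorTensorTensorComm k (H ⊗[k] H) H W H).toLinearMap

@[simp] lemma theta_tmul (act : H →ₗ[k] W →ₗ[k] W) (f g : H →ₗ[k] H)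
    (a b c : H) (w : W) (x : H) :
    theta (k := k) act f g (((a ⊗ₜ[k] b) ⊗ₜ[k] c) ⊗ₜ[k] (w ⊗ₜ[k] x))
      = act b w ⊗ₜ[k] (g c * x * f a) := by
  simp [theta, mul_assoc]

/-- The combined contraction. -/
def bigL (F : ((H ⊗[k] H) ⊗[k] H) ⊗[k] (M ⊗[k] H) →ₗ[k] M ⊗[k] H)
    (G : ((H ⊗[k] H) ⊗[k] H) ⊗[k] (N ⊗[k] H) →ₗ[k] N ⊗[k] H) :
    (((H ⊗[k] H) ⊗[k] H) ⊗[k] ((H ⊗[k] H) ⊗[k] H)) ⊗[k] ((M ⊗[k] H) ⊗[k] (N ⊗[k] H))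
      →ₗ[k] (M ⊗[k] N) ⊗[k] H :=
  fco (k := k) ∘ₗ TensorProduct.map F G ∘ₗ
  (tensorTensorTensorComm k ((H ⊗[k] H) ⊗[k] H) ((H ⊗[k] H) ⊗[k] H)
    (M ⊗[k] H) (N ⊗[k] H)).toLinearMap ∘ₗ
  LinearMap.rTensor ((M ⊗[k] H) ⊗[k] (N ⊗[k] H))
    (TensorProduct.comm k ((H ⊗[k] H) ⊗[k] H) ((H ⊗[k] H) ⊗[k] H)).toLinearMap

@[simp] lemma bigL_tmul (F : ((H ⊗[k] H) ⊗[k] H) ⊗[k] (M ⊗[k] H) →ₗ[k] M ⊗[k] H)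
    (G : ((H ⊗[k] H) ⊗[k] H) ⊗[k] (N ⊗[k] H) →ₗ[k] N ⊗[k] H)
    (X Y : (H ⊗[k] H) ⊗[k] H) (u : M ⊗[k] H) (v : N ⊗[k] H) :
    bigL (k := k) F G ((X ⊗ₜ[k] Y) ⊗ₜ[k] (u ⊗ₜ[k] v))
      = fco (k := k) (F (Y ⊗ₜ[k] u) ⊗ₜ[k] G (X ⊗ₜ[k] v)) := by
  simp [bigL]

/-- Insertion of `1` into the first slot of the second triple. -/
def ksec : ((H ⊗[k] H) ⊗[k] H) ⊗[k] (H ⊗[k] H) →ₗ[k]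
    ((H ⊗[k] H) ⊗[k] H) ⊗[k] ((H ⊗[k] H) ⊗[k] H) :=
  LinearMap.lTensor ((H ⊗[k] H) ⊗[k] H)
    (LinearMap.rTensor H (TensorProduct.mk k H H 1))

@[simp] lemma ksec_tmul (X : (H ⊗[k] H) ⊗[k] H) (y₂ y₃ : H) :
    ksec (k := k) (X ⊗ₜ[k] (y₂ ⊗ₜ[k] y₃)) = X ⊗ₜ[k] ((1 ⊗ₜ[k] y₂) ⊗ₜ[k] y₃) := by
  simp [ksec]

lemma ksec_tmul' (X : (H ⊗[k] H) ⊗[k] H) (Y : H ⊗[k] H) :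
    ksec (k := k) (X ⊗ₜ[k] Y)
      = X ⊗ₜ[k] (LinearMap.rTensor H (TensorProduct.mk k H H 1) Y) := by
  simp [ksec]

/-- Embedding used for the right-hand side. -/
def embed : (H ⊗[k] (H ⊗[k] H)) ⊗[k] H →ₗ[k]
    ((H ⊗[k] H) ⊗[k] H) ⊗[k] ((H ⊗[k] H) ⊗[k] H) :=
  TensorProduct.map ((TensorProduct.mk k (H ⊗[k] H) H).flip 1)
    (LinearMap.rTensor H (TensorProduct.mk k H H 1)) ∘ₗ
  (TensorProduct.assoc k (H ⊗[k] H) H H).toLinearMap ∘ₗ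
  LinearMap.rTensor H (TensorProduct.assoc k H H H).symm.toLinearMap

@[simp] lemma embed_tmul (g₁ g₂ g₃ g₄ : H) :
    embed (k := k) ((g₁ ⊗ₜ[k] (g₂ ⊗ₜ[k] g₃)) ⊗ₜ[k] g₄)
      = ((g₁ ⊗ₜ[k] g₂) ⊗ₜ[k] (1 : H)) ⊗ₜ[k] ((1 ⊗ₜ[k] g₃) ⊗ₜ[k] g₄) := by
  simp [embed]

end Mod

section Inv
variable {M N : Type} [AddCommGroup M] [Module k M] [AddCommGroup N] [Module k N]

lemma inv_lemma {Sinv : H → H}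
    (hS1 : ∀ h : H, S (Sinv h) = h) (hS2 : ∀ h : H, Sinv (S h) = h)
    (α β γ : H ≃ₗ[k] H)
    (hαm : ∀ x y : H, α (x * y) = α x * α y) (hα1 : α 1 = 1)
    (actM : H →ₗ[k] M →ₗ[k] M) (actN : H →ₗ[k] N →ₗ[k] N) :
    (bigL (k := k)
        (theta (k := k) actM (α.toLinearMap ∘ₗ sinvL (k := k) hS1 hS2) β.toLinearMap)
        (theta (k := k) actN (γ.toLinearMap ∘ₗ sinvL (k := k) hS1 hS2) α.toLinearMap)) ∘ₗ
      LinearMap.rTensor ((M ⊗[k] H) ⊗[k] (N ⊗[k] H))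
        (ksec (k := k) ∘ₗ kmap (k := k) hS1 hS2)
    = bigL (k := k)
        (theta (k := k) actM (α.toLinearMap ∘ₗ sinvL (k := k) hS1 hS2) β.toLinearMap)
        (theta (k := k) actN (γ.toLinearMap ∘ₗ sinvL (k := k) hS1 hS2) α.toLinearMap) := by
  ext x₁ x₂ x₃ y₁ y₂ y₃ u₀ u₁ v₀ v₁
  simp [ksec, Sinv_one hS1 hS2, hα1, hαm, mul_assoc]

end Inv


lemma yd_closed {M : Type} [AddCommGroup M] [Module k M] {Sinv : H → H}
    (hS1 : ∀ h : H, S (Sinv h) = h) (hS2 : ∀ h : H, Sinv (S h) = h)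
    (fA fB : H ≃ₗ[k] H)
    (act : H →ₗ[k] M →ₗ[k] M) (coact : M →ₗ[k] M ⊗[k] H)
    (h5 : ∀ (h : H) (m : M) (s t : Finset ℕ) (a b c : ℕ → H) (m₀ : ℕ → M) (m₁ : ℕ → H),
      LinearMap.rTensor H Δ (Δ h) = ∑ i ∈ s, (a i ⊗ₜ[k] b i) ⊗ₜ[k] c i →
      coact m = ∑ j ∈ t, m₀ j ⊗ₜ[k] m₁ j →
      coact (act h m) = ∑ i ∈ s, ∑ j ∈ t,
        act (b i) (m₀ j) ⊗ₜ[k] (fB (c i) * m₁ j * fA (Sinv (a i))))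
    (h : H) (m : M) :
    coact (act h m)
      = theta (k := k) act (fA.toLinearMap ∘ₗ sinvL (k := k) hS1 hS2) fB.toLinearMap
          ((LinearMap.rTensor H Δ (Δ h)) ⊗ₜ[k] coact m) := by
  obtain ⟨s, a, b, c, hr⟩ := exists_rep₃ (k := k) (LinearMap.rTensor H Δ (Δ h))
  obtain ⟨t, m₀, m₁, hc⟩ := exists_rep (k := k) (coact m)
  have hRHS : theta (k := k) act (fA.toLinearMap ∘ₗ sinvL (k := k) hS1 hS2) fB.toLinearMap
      ((∑ i ∈ s, (a i ⊗ₜ[k] b i) ⊗ₜ[k] c i) ⊗ₜ[k] (∑ j ∈ t, m₀ j ⊗ₜ[k] m₁ j))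
      = ∑ i ∈ s, ∑ j ∈ t,
        act (b i) (m₀ j) ⊗ₜ[k] (fB (c i) * m₁ j * fA (Sinv (a i))) := by
    rw [sum_tmul, map_sum]
    refine Finset.sum_congr rfl fun i _ => ?_
    rw [tmul_sum, map_sum]
    refine Finset.sum_congr rfl fun j _ => ?_
    rw [theta_tmul]
    simp
  rw [hr, hc, hRHS]
  exact h5 h m s t a b c m₀ m₁ hr hc


section Phi
variable {M N : Type} [AddCommGroup M] [Module k M] [AddCommGroup N] [Module k N]

def phi : ((M ⊗[k] H) ⊗[k] H) ⊗[k] ((N ⊗[k] H) ⊗[k] H) →ₗ[k]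
    ((M ⊗[k] N) ⊗[k] H) ⊗[k] H :=
  TensorProduct.map (fco (k := k)) (LinearMap.mul' k H) ∘ₗ
    (tensorTensorTensorComm k (M ⊗[k] H) H (N ⊗[k] H) H).toLinearMap

@[simp] lemma phi_tmul (U : M ⊗[k] H) (mc : H) (V : N ⊗[k] H) (nc : H) :
    phi (k := k) ((U ⊗ₜ[k] mc) ⊗ₜ[k] (V ⊗ₜ[k] nc))
      = fco (k := k) (U ⊗ₜ[k] V) ⊗ₜ[k] (mc * nc) := by
  simp [phi]

end Phi

end GYDAux


open Coalgebra HopfAlgebra GYDAux in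
theorem statement_1
    (k H : Type) [Field k] [Ring H] [HopfAlgebra k H]
    (Sinv : H → H) (hS : GYD.IsAntipodeInv k H Sinv)
    (α β γ : H ≃ₗ[k] H)
    (hα : GYD.IsHopfAut k H α) (hβ : GYD.IsHopfAut k H β) (hγ : GYD.IsHopfAut k H γ)
    (M N : Type) [AddCommGroup M] [Module k M] [AddCommGroup N] [Module k N]
    (actM : H →ₗ[k] M →ₗ[k] M) (coactM : M →ₗ[k] M ⊗[k] H)
    (actN : H →ₗ[k] N →ₗ[k] N) (coactN : N →ₗ[k] N ⊗[k] H)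
    (hM : GYD.IsYD k H Sinv ⇑α ⇑β actM coactM)
    (hN : GYD.IsYD k H Sinv ⇑γ ⇑α actN coactN)
    (act₂ : H →ₗ[k] (M ⊗[k] N) →ₗ[k] (M ⊗[k] N))
    (coact₂ : M ⊗[k] N →ₗ[k] (M ⊗[k] N) ⊗[k] H)
    (hact : GYD.TensorActCharTwo k H actM actN act₂)
    (hcoact : GYD.TensorCoactCharTwo k H coactM coactN coact₂) :
    GYD.IsYD k H Sinv ⇑γ ⇑β act₂ coact₂ := by

  obtain ⟨hS1, hS2⟩ := hS
  obtain ⟨hM1, hM2, hM3, hM4, hM5⟩ := hM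
  obtain ⟨hN1, hN2, hN3, hN4, hN5⟩ := hN
  refine ⟨?_, ?_, ?_, ?_, ?_⟩
  · -- unit
    intro x
    induction x using TensorProduct.induction_on with
    | zero => simp
    | tmul m n =>
      have h1 : Coalgebra.comul (R := k) (1 : H)
          = ∑ i ∈ ({0} : Finset ℕ), (fun _ => (1 : H)) i ⊗ₜ[k] (fun _ => (1 : H)) i := by
        simp [Algebra.TensorProduct.one_def]
      rw [hact 1 m n {0} _ _ h1]
      simp [hM1, hN1]
    | add x y hx hy => rw [map_add, hx, hy]
  · -- multiplicativity
    intro g h x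
    induction x using TensorProduct.induction_on with
    | zero => simp
    | tmul m n =>
      obtain ⟨sg, g1, g2, hg⟩ := exists_rep (k := k) (Coalgebra.comul (R := k) g)
      obtain ⟨sh, h1, h2, hh⟩ := exists_rep (k := k) (Coalgebra.comul (R := k) h)
      obtain ⟨u, p, q, hgh⟩ := exists_rep (k := k) (Coalgebra.comul (R := k) (g * h))
      have hmul : Coalgebra.comul (R := k) (g * h)
          = ∑ i ∈ sg, ∑ j ∈ sh, (g1 i * h1 j) ⊗ₜ[k] (g2 i * h2 j) := by
        rw [Bialgebra.comul_mul, hg, hh, Finset.sum_mul_sum]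
        exact Finset.sum_congr rfl fun i _ => Finset.sum_congr rfl fun j _ => by
          simp [Algebra.TensorProduct.tmul_mul_tmul]
      set E : H ⊗[k] H →ₗ[k] M ⊗[k] N :=
        TensorProduct.map (actM.flip m) (actN.flip n) ∘ₗ
          (TensorProduct.comm k H H).toLinearMap with hE
      have hE1 : E (Coalgebra.comul (R := k) (g * h))
          = ∑ l ∈ u, actM (q l) m ⊗ₜ[k] actN (p l) n := by
        rw [hgh, map_sum]
        exact Finset.sum_congr rfl fun l _ => by simp [hE]
      have hE2 : E (Coalgebra.comul (R := k) (g * h))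
          = ∑ i ∈ sg, ∑ j ∈ sh,
              actM (g2 i * h2 j) m ⊗ₜ[k] actN (g1 i * h1 j) n := by
        rw [hmul, map_sum]
        refine Finset.sum_congr rfl fun i _ => ?_
        rw [map_sum]
        exact Finset.sum_congr rfl fun j _ => by simp [hE]
      rw [hact (g * h) m n u p q hgh]
      rw [hact h m n sh h1 h2 hh, map_sum]
      have : ∀ j ∈ sh, act₂ g (actM (h2 j) m ⊗ₜ[k] actN (h1 j) n)
          = ∑ i ∈ sg, actM (g2 i * h2 j) m ⊗ₜ[k] actN (g1 i * h1 j) n := by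
        intro j _
        rw [hact g _ _ sg g1 g2 hg]
        exact Finset.sum_congr rfl fun i _ => by rw [hM2, hN2]
      rw [Finset.sum_congr rfl this, ← hE1, hE2, Finset.sum_comm]
    | add x y hx hy => rw [map_add, map_add, map_add, hx, hy]
  · -- coassociativity
    intro x
    induction x using TensorProduct.induction_on with
    | zero => simp
    | tmul m n =>
      obtain ⟨D, m₀, m₁, hcm⟩ := exists_rep (k := k) (coactM m)
      obtain ⟨Ee, n₀, n₁, hcn⟩ := exists_rep (k := k) (coactN n)
      choose DM ma mb hma using fun d : ℕ => exists_rep (k := k) (coactM (m₀ d))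
      choose DN na nb hna using fun e : ℕ => exists_rep (k := k) (coactN (n₀ e))
      choose PM P Q hP using fun d : ℕ => exists_rep (k := k) (Coalgebra.comul (R := k) (m₁ d))
      choose PN P' Q' hP' using fun e : ℕ => exists_rep (k := k) (Coalgebra.comul (R := k) (n₁ e))
      have hc2 : coact₂ (m ⊗ₜ[k] n)
          = ∑ d ∈ D, ∑ e ∈ Ee, (m₀ d ⊗ₜ[k] n₀ e) ⊗ₜ[k] (m₁ d * n₁ e) :=
        hcoact m n D Ee m₀ m₁ n₀ n₁ hcm hcn
      have hXm : LinearMap.rTensor H coactM (coactM m)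
          = ∑ d ∈ D, ∑ d' ∈ DM d, (ma d d' ⊗ₜ[k] mb d d') ⊗ₜ[k] m₁ d := by
        rw [hcm, map_sum]
        exact Finset.sum_congr rfl fun d _ => by
          rw [LinearMap.rTensor_tmul, hma d, sum_tmul]
      have hXn : LinearMap.rTensor H coactN (coactN n)
          = ∑ e ∈ Ee, ∑ e' ∈ DN e, (na e e' ⊗ₜ[k] nb e e') ⊗ₜ[k] n₁ e := by
        rw [hcn, map_sum]
        exact Finset.sum_congr rfl fun e _ => by
          rw [LinearMap.rTensor_tmul, hna e, sum_tmul]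
      have LHSval : LinearMap.rTensor H coact₂ (coact₂ (m ⊗ₜ[k] n))
          = ∑ d ∈ D, ∑ e ∈ Ee, ∑ d' ∈ DM d, ∑ e' ∈ DN e,
              ((ma d d' ⊗ₜ[k] na e e') ⊗ₜ[k] (mb d d' * nb e e')) ⊗ₜ[k] (m₁ d * n₁ e) := by
        rw [hc2, map_sum]
        refine Finset.sum_congr rfl fun d _ => ?_
        rw [map_sum]
        refine Finset.sum_congr rfl fun e _ => ?_
        rw [LinearMap.rTensor_tmul,
          hcoact (m₀ d) (n₀ e) (DM d) (DN e) (ma d) (mb d) (na e) (nb e) (hma d) (hna e),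
          sum_tmul]
        exact Finset.sum_congr rfl fun d' _ => by rw [sum_tmul]
      have RHS1 : phi (k := k) ((LinearMap.rTensor H coactM (coactM m)) ⊗ₜ[k]
            (LinearMap.rTensor H coactN (coactN n)))
          = ∑ d ∈ D, ∑ d' ∈ DM d, ∑ e ∈ Ee, ∑ e' ∈ DN e,
              ((ma d d' ⊗ₜ[k] na e e') ⊗ₜ[k] (mb d d' * nb e e')) ⊗ₜ[k] (m₁ d * n₁ e) := by
        rw [hXm, hXn, sum_tmul, map_sum]
        refine Finset.sum_congr rfl fun d _ => ?_
        rw [sum_tmul, map_sum]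
        refine Finset.sum_congr rfl fun d' _ => ?_
        rw [tmul_sum, map_sum]
        refine Finset.sum_congr rfl fun e _ => ?_
        rw [tmul_sum, map_sum]
        refine Finset.sum_congr rfl fun e' _ => ?_
        rw [phi_tmul, fco_tmul]
      have A1 : LinearMap.rTensor H coact₂ (coact₂ (m ⊗ₜ[k] n))
          = phi (k := k) ((LinearMap.rTensor H coactM (coactM m)) ⊗ₜ[k]
              (LinearMap.rTensor H coactN (coactN n))) := by
        rw [LHSval, RHS1]
        exact Finset.sum_congr rfl fun d _ => Finset.sum_comm
      have hYm : (TensorProduct.assoc k M H H).symm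
            (LinearMap.lTensor M (Coalgebra.comul (R := k)) (coactM m))
          = ∑ d ∈ D, ∑ i ∈ PM d, (m₀ d ⊗ₜ[k] P d i) ⊗ₜ[k] Q d i := by
        rw [hcm, map_sum, map_sum]
        refine Finset.sum_congr rfl fun d _ => ?_
        rw [LinearMap.lTensor_tmul, hP d, tmul_sum, map_sum]
        exact Finset.sum_congr rfl fun i _ => by rw [assoc_symm_tmul]
      have hYn : (TensorProduct.assoc k N H H).symm
            (LinearMap.lTensor N (Coalgebra.comul (R := k)) (coactN n))
          = ∑ e ∈ Ee, ∑ j ∈ PN e, (n₀ e ⊗ₜ[k] P' e j) ⊗ₜ[k] Q' e j := by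
        rw [hcn, map_sum, map_sum]
        refine Finset.sum_congr rfl fun e _ => ?_
        rw [LinearMap.lTensor_tmul, hP' e, tmul_sum, map_sum]
        exact Finset.sum_congr rfl fun j _ => by rw [assoc_symm_tmul]
      have LHS2val : (TensorProduct.assoc k (M ⊗[k] N) H H).symm
            (LinearMap.lTensor (M ⊗[k] N) (Coalgebra.comul (R := k)) (coact₂ (m ⊗ₜ[k] n)))
          = ∑ d ∈ D, ∑ e ∈ Ee, ∑ i ∈ PM d, ∑ j ∈ PN e,
              ((m₀ d ⊗ₜ[k] n₀ e) ⊗ₜ[k] (P d i * P' e j)) ⊗ₜ[k] (Q d i * Q' e j) := by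
        rw [hc2, map_sum, map_sum]
        refine Finset.sum_congr rfl fun d _ => ?_
        rw [map_sum, map_sum]
        refine Finset.sum_congr rfl fun e _ => ?_
        rw [LinearMap.lTensor_tmul, Bialgebra.comul_mul, hP d, hP' e, Finset.sum_mul_sum]
        have hinner : ∀ i ∈ PM d, ∑ j ∈ PN e,
            (P d i ⊗ₜ[k] Q d i) * (P' e j ⊗ₜ[k] Q' e j)
            = ∑ j ∈ PN e, (P d i * P' e j) ⊗ₜ[k] (Q d i * Q' e j) := by
          intro i _
          exact Finset.sum_congr rfl fun j _ => by
            simp [Algebra.TensorProduct.tmul_mul_tmul]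
        rw [Finset.sum_congr rfl hinner, tmul_sum, map_sum]
        refine Finset.sum_congr rfl fun i _ => ?_
        rw [tmul_sum, map_sum]
        exact Finset.sum_congr rfl fun j _ => by rw [assoc_symm_tmul]
      have RHS2 : phi (k := k)
            (((TensorProduct.assoc k M H H).symm
                (LinearMap.lTensor M (Coalgebra.comul (R := k)) (coactM m))) ⊗ₜ[k]
              ((TensorProduct.assoc k N H H).symm
                (LinearMap.lTensor N (Coalgebra.comul (R := k)) (coactN n))))
          = ∑ d ∈ D, ∑ i ∈ PM d, ∑ e ∈ Ee, ∑ j ∈ PN e,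
              ((m₀ d ⊗ₜ[k] n₀ e) ⊗ₜ[k] (P d i * P' e j)) ⊗ₜ[k] (Q d i * Q' e j) := by
        rw [hYm, hYn, sum_tmul, map_sum]
        refine Finset.sum_congr rfl fun d _ => ?_
        rw [sum_tmul, map_sum]
        refine Finset.sum_congr rfl fun i _ => ?_
        rw [tmul_sum, map_sum]
        refine Finset.sum_congr rfl fun e _ => ?_
        rw [tmul_sum, map_sum]
        refine Finset.sum_congr rfl fun j _ => ?_
        rw [phi_tmul, fco_tmul]
      have A2 : (TensorProduct.assoc k (M ⊗[k] N) H H).symm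
            (LinearMap.lTensor (M ⊗[k] N) (Coalgebra.comul (R := k)) (coact₂ (m ⊗ₜ[k] n)))
          = phi (k := k)
              (((TensorProduct.assoc k M H H).symm
                  (LinearMap.lTensor M (Coalgebra.comul (R := k)) (coactM m))) ⊗ₜ[k]
                ((TensorProduct.assoc k N H H).symm
                  (LinearMap.lTensor N (Coalgebra.comul (R := k)) (coactN n)))) := by
        rw [LHS2val, RHS2]
        exact Finset.sum_congr rfl fun d _ => Finset.sum_comm
      rw [A1, A2, hM3 m, hN3 n]
    | add x y hx hy =>
      simp only [map_add, hx, hy]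
  · -- counit
    intro x
    induction x using TensorProduct.induction_on with
    | zero => simp
    | tmul m n =>
      obtain ⟨D, m₀, m₁, hcm⟩ := exists_rep (k := k) (coactM m)
      obtain ⟨Ee, n₀, n₁, hcn⟩ := exists_rep (k := k) (coactN n)
      have hm4 : ∑ d ∈ D, Coalgebra.counit (R := k) (m₁ d) • m₀ d = m := by
        have := hM4 m
        rw [hcm, map_sum, map_sum] at this
        simpa using this
      have hn4 : ∑ e ∈ Ee, Coalgebra.counit (R := k) (n₁ e) • n₀ e = n := by
        have := hN4 n
        rw [hcn, map_sum, map_sum] at this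
        simpa using this
      have LHSval : TensorProduct.rid k (M ⊗[k] N)
          (LinearMap.lTensor (M ⊗[k] N) (Coalgebra.counit (R := k)) (coact₂ (m ⊗ₜ[k] n)))
          = ∑ d ∈ D, ∑ e ∈ Ee, (Coalgebra.counit (R := k) (m₁ d) • m₀ d) ⊗ₜ[k]
              (Coalgebra.counit (R := k) (n₁ e) • n₀ e) := by
        rw [hcoact m n D Ee m₀ m₁ n₀ n₁ hcm hcn, map_sum, map_sum]
        refine Finset.sum_congr rfl fun d _ => ?_
        rw [map_sum, map_sum]
        refine Finset.sum_congr rfl fun e _ => ?_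
        rw [LinearMap.lTensor_tmul]
        simp [Bialgebra.counit_mul, smul_tmul', smul_smul, tmul_smul, mul_comm]
      have combine : (∑ d ∈ D, Coalgebra.counit (R := k) (m₁ d) • m₀ d) ⊗ₜ[k]
            (∑ e ∈ Ee, Coalgebra.counit (R := k) (n₁ e) • n₀ e)
          = ∑ d ∈ D, ∑ e ∈ Ee, (Coalgebra.counit (R := k) (m₁ d) • m₀ d) ⊗ₜ[k]
              (Coalgebra.counit (R := k) (n₁ e) • n₀ e) := by
        rw [sum_tmul]
        exact Finset.sum_congr rfl fun d _ => tmul_sum _ _ _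
      rw [LHSval, ← combine, hm4, hn4]
    | add x y hx hy =>
      rw [map_add, map_add, map_add, hx, hy]
  · -- Yetter-Drinfeld compatibility
    intro h w s t a b c w₀ w₁ hrep3 hrepc
    have coactFco : ∀ (u : M) (v : N),
        coact₂ (u ⊗ₜ[k] v) = fco (k := k) (coactM u ⊗ₜ[k] coactN v) := by
      intro u v
      obtain ⟨su, u₀, u₁, hu⟩ := exists_rep (k := k) (coactM u)
      obtain ⟨sv, v₀, v₁, hv⟩ := exists_rep (k := k) (coactN v)
      rw [hcoact u v su sv u₀ u₁ v₀ v₁ hu hv, hu, hv, sum_tmul, map_sum]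
      refine Finset.sum_congr rfl fun i _ => ?_
      rw [tmul_sum, map_sum]
      exact Finset.sum_congr rfl fun j _ => (fco_tmul _ _ _ _).symm
    have cmlaw := yd_closed (k := k) hS1 hS2 α β actM coactM hM5
    have cnlaw := yd_closed (k := k) hS1 hS2 γ α actN coactN hN5
    have law : ∀ x : M ⊗[k] N,
        coact₂ (act₂ h x)
          = theta (k := k) act₂ (γ.toLinearMap ∘ₗ sinvL (k := k) hS1 hS2) β.toLinearMap
              ((LinearMap.rTensor H (Coalgebra.comul (R := k))
                  (Coalgebra.comul (R := k) h)) ⊗ₜ[k] coact₂ x) := by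
      intro x
      induction x using TensorProduct.induction_on with
      | zero => simp
      | add x y hx hy => simp only [map_add, tmul_add, hx, hy]
      | tmul m n =>
        obtain ⟨sh, h1, h2, hh⟩ := exists_rep (k := k) (Coalgebra.comul (R := k) h)
        choose tA a1 a2 hA using fun i : ℕ =>
          exists_rep (k := k) (Coalgebra.comul (R := k) (h1 i))
        choose tB b1 b2 hB using fun i : ℕ =>
          exists_rep (k := k) (Coalgebra.comul (R := k) (h2 i))
        choose uB b11 b12 hB1 using fun (i j : ℕ) =>
          exists_rep (k := k) (Coalgebra.comul (R := k) (b1 i j))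
        obtain ⟨D, m₀, m₁, hcm⟩ := exists_rep (k := k) (coactM m)
        obtain ⟨Ee, n₀, n₁, hcn⟩ := exists_rep (k := k) (coactN n)
        have hc2 : coact₂ (m ⊗ₜ[k] n)
            = ∑ d ∈ D, ∑ e ∈ Ee, (m₀ d ⊗ₜ[k] n₀ e) ⊗ₜ[k] (m₁ d * n₁ e) :=
          hcoact m n D Ee m₀ m₁ n₀ n₁ hcm hcn
        -- step 1-4 : LHS as bigL applied to (Δ⊗Δ-type element)
        have st2 : coact₂ (act₂ h (m ⊗ₜ[k] n))
            = ∑ i ∈ sh,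
                bigL (k := k)
                  (theta (k := k) actM (α.toLinearMap ∘ₗ sinvL (k := k) hS1 hS2)
                    β.toLinearMap)
                  (theta (k := k) actN (γ.toLinearMap ∘ₗ sinvL (k := k) hS1 hS2)
                    α.toLinearMap)
                  (((LinearMap.rTensor H (Coalgebra.comul (R := k))
                        (Coalgebra.comul (R := k) (h1 i))) ⊗ₜ[k]
                      (LinearMap.rTensor H (Coalgebra.comul (R := k))
                        (Coalgebra.comul (R := k) (h2 i)))) ⊗ₜ[k]
                    (coactM m ⊗ₜ[k] coactN n)) := by
          rw [hact h m n sh h1 h2 hh, map_sum]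
          refine Finset.sum_congr rfl fun i _ => ?_
          rw [coactFco, cmlaw (h2 i) m, cnlaw (h1 i) n, bigL_tmul]
        have hTT : TensorProduct.map
              (LinearMap.rTensor H (Coalgebra.comul (R := k)) ∘ₗ Coalgebra.comul (R := k))
              (LinearMap.rTensor H (Coalgebra.comul (R := k)) ∘ₗ Coalgebra.comul (R := k))
              (Coalgebra.comul (R := k) h)
            = ∑ i ∈ sh,
                (LinearMap.rTensor H (Coalgebra.comul (R := k))
                    (Coalgebra.comul (R := k) (h1 i))) ⊗ₜ[k]
                  (LinearMap.rTensor H (Coalgebra.comul (R := k))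
                    (Coalgebra.comul (R := k) (h2 i))) := by
          rw [hh, map_sum]
          exact Finset.sum_congr rfl fun i _ => by
            rw [map_tmul, LinearMap.comp_apply, LinearMap.comp_apply]
        have st4 : coact₂ (act₂ h (m ⊗ₜ[k] n))
            = bigL (k := k)
                (theta (k := k) actM (α.toLinearMap ∘ₗ sinvL (k := k) hS1 hS2)
                  β.toLinearMap)
                (theta (k := k) actN (γ.toLinearMap ∘ₗ sinvL (k := k) hS1 hS2)
                  α.toLinearMap)
                ((TensorProduct.map
                    (LinearMap.rTensor H (Coalgebra.comul (R := k)) ∘ₗ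
                      Coalgebra.comul (R := k))
                    (LinearMap.rTensor H (Coalgebra.comul (R := k)) ∘ₗ
                      Coalgebra.comul (R := k))
                    (Coalgebra.comul (R := k) h)) ⊗ₜ[k]
                  (coactM m ⊗ₜ[k] coactN n)) := by
          rw [st2, hTT, sum_tmul, map_sum]
        -- step 5 : use `inv_lemma` and `star`
        have st5 := LinearMap.congr_fun
          (inv_lemma (k := k) hS1 hS2 α β γ hα.1 hα.2.1 actM actN)
          ((TensorProduct.map
              (LinearMap.rTensor H (Coalgebra.comul (R := k)) ∘ₗ Coalgebra.comul (R := k))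
              (LinearMap.rTensor H (Coalgebra.comul (R := k)) ∘ₗ Coalgebra.comul (R := k))
              (Coalgebra.comul (R := k) h)) ⊗ₜ[k] (coactM m ⊗ₜ[k] coactN n))
        rw [LinearMap.comp_apply, LinearMap.rTensor_tmul, LinearMap.comp_apply] at st5
        rw [star (k := k) hS1 hS2 h] at st5
        rw [st4, ← st5]
        -- step 7 : compute both sides through explicit representatives
        have hform2 : LinearMap.rTensor H (Coalgebra.comul (R := k))
              (Coalgebra.comul (R := k) h)
            = ∑ i ∈ sh, ∑ v ∈ tB i, (h1 i ⊗ₜ[k] b1 i v) ⊗ₜ[k] b2 i v := by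
          rw [← Coalgebra.coassoc_symm_apply, hh, map_sum, map_sum]
          refine Finset.sum_congr rfl fun i _ => ?_
          rw [LinearMap.lTensor_tmul, hB i, tmul_sum, map_sum]
          exact Finset.sum_congr rfl fun v _ => by rw [assoc_symm_tmul]
        -- ksec (Ω (Δ h)) expanded
        have hksecΩ : ksec (k := k)
              (TensorProduct.map
                (((TensorProduct.mk k (H ⊗[k] H) H).flip 1) ∘ₗ Coalgebra.comul (R := k))
                (Coalgebra.comul (R := k)) (Coalgebra.comul (R := k) h))
            = ∑ i ∈ sh, ∑ v ∈ tB i, ∑ j ∈ tA i,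
                ((a1 i j ⊗ₜ[k] a2 i j) ⊗ₜ[k] (1 : H)) ⊗ₜ[k]
                  ((1 ⊗ₜ[k] b1 i v) ⊗ₜ[k] b2 i v) := by
          rw [hh, map_sum, map_sum]
          refine Finset.sum_congr rfl fun i _ => ?_
          have e1 : LinearMap.rTensor H (TensorProduct.mk k H H 1)
                (Coalgebra.comul (R := k) (h2 i))
              = ∑ v ∈ tB i, (1 ⊗ₜ[k] b1 i v) ⊗ₜ[k] b2 i v := by
            rw [hB i, map_sum]
            exact Finset.sum_congr rfl fun v _ => by
              rw [LinearMap.rTensor_tmul, TensorProduct.mk_apply]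
          rw [map_tmul, LinearMap.comp_apply]
          rw [show ((TensorProduct.mk k (H ⊗[k] H) H).flip 1)
                (Coalgebra.comul (R := k) (h1 i))
              = (Coalgebra.comul (R := k) (h1 i)) ⊗ₜ[k] (1 : H) from rfl]
          rw [ksec_tmul', e1, tmul_sum]
          refine Finset.sum_congr rfl fun v _ => ?_
          rw [hA i, sum_tmul, sum_tmul]
        -- Zθ and Zb
        have tree4c : LinearMap.rTensor H
              (LinearMap.lTensor H (Coalgebra.comul (R := k)))
              (LinearMap.rTensor H (Coalgebra.comul (R := k))
                (Coalgebra.comul (R := k) h))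
            = LinearMap.rTensor H
                ((TensorProduct.assoc k H H H).toLinearMap ∘ₗ
                  LinearMap.rTensor H (Coalgebra.comul (R := k)))
                (LinearMap.rTensor H (Coalgebra.comul (R := k))
                  (Coalgebra.comul (R := k) h)) := by
          have hrT1 : LinearMap.rTensor H (Coalgebra.comul (R := k))
                (Coalgebra.comul (R := k) h)
              = ∑ i ∈ sh, (Coalgebra.comul (R := k) (h1 i)) ⊗ₜ[k] h2 i := by
            rw [hh, map_sum]
            exact Finset.sum_congr rfl fun i _ => by rw [LinearMap.rTensor_tmul]
          rw [hrT1, map_sum, map_sum]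
          refine Finset.sum_congr rfl fun i _ => ?_
          rw [LinearMap.rTensor_tmul, LinearMap.rTensor_tmul, LinearMap.comp_apply]
          exact congrArg (· ⊗ₜ[k] h2 i) (Coalgebra.coassoc_apply (h1 i)).symm
        have hZb : LinearMap.rTensor H
              ((TensorProduct.assoc k H H H).toLinearMap ∘ₗ
                LinearMap.rTensor H (Coalgebra.comul (R := k)))
              (LinearMap.rTensor H (Coalgebra.comul (R := k))
                (Coalgebra.comul (R := k) h))
            = ∑ i ∈ sh, ∑ v ∈ tB i, ∑ j ∈ tA i,
                (a1 i j ⊗ₜ[k] (a2 i j ⊗ₜ[k] b1 i v)) ⊗ₜ[k] b2 i v := by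
          rw [hform2, map_sum]
          refine Finset.sum_congr rfl fun i _ => ?_
          rw [map_sum]
          refine Finset.sum_congr rfl fun v _ => ?_
          rw [LinearMap.rTensor_tmul, LinearMap.comp_apply, LinearMap.rTensor_tmul,
            hA i, sum_tmul, map_sum, sum_tmul]
          exact Finset.sum_congr rfl fun j _ => by simp
        have hZθ : LinearMap.rTensor H
              (LinearMap.lTensor H (Coalgebra.comul (R := k)))
              (LinearMap.rTensor H (Coalgebra.comul (R := k))
                (Coalgebra.comul (R := k) h))
            = ∑ i ∈ sh, ∑ v ∈ tB i, ∑ r ∈ uB i v,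
                (h1 i ⊗ₜ[k] (b11 i v r ⊗ₜ[k] b12 i v r)) ⊗ₜ[k] b2 i v := by
          rw [hform2, map_sum]
          refine Finset.sum_congr rfl fun i _ => ?_
          rw [map_sum]
          refine Finset.sum_congr rfl fun v _ => ?_
          rw [LinearMap.rTensor_tmul, LinearMap.lTensor_tmul, hB1 i v,
            tmul_sum, sum_tmul]
        have hembZb : embed (k := k)
              (LinearMap.rTensor H
                (LinearMap.lTensor H (Coalgebra.comul (R := k)))
                (LinearMap.rTensor H (Coalgebra.comul (R := k))
                  (Coalgebra.comul (R := k) h)))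
            = ksec (k := k)
                (TensorProduct.map
                  (((TensorProduct.mk k (H ⊗[k] H) H).flip 1) ∘ₗ Coalgebra.comul (R := k))
                  (Coalgebra.comul (R := k)) (Coalgebra.comul (R := k) h)) := by
          rw [tree4c, hZb, hksecΩ, map_sum]
          refine Finset.sum_congr rfl fun i _ => ?_
          rw [map_sum]
          refine Finset.sum_congr rfl fun v _ => ?_
          rw [map_sum]
          exact Finset.sum_congr rfl fun j _ => by rw [embed_tmul]
        -- P2a : the right-hand side as bigL of embed Zθ
        have P2a : theta (k := k) act₂ (γ.toLinearMap ∘ₗ sinvL (k := k) hS1 hS2)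
              β.toLinearMap
              ((LinearMap.rTensor H (Coalgebra.comul (R := k))
                  (Coalgebra.comul (R := k) h)) ⊗ₜ[k] coact₂ (m ⊗ₜ[k] n))
            = bigL (k := k)
                (theta (k := k) actM (α.toLinearMap ∘ₗ sinvL (k := k) hS1 hS2)
                  β.toLinearMap)
                (theta (k := k) actN (γ.toLinearMap ∘ₗ sinvL (k := k) hS1 hS2)
                  α.toLinearMap)
                ((embed (k := k)
                    (LinearMap.rTensor H
                      (LinearMap.lTensor H (Coalgebra.comul (R := k)))
                      (LinearMap.rTensor H (Coalgebra.comul (R := k))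
                        (Coalgebra.comul (R := k) h)))) ⊗ₜ[k]
                  (coactM m ⊗ₜ[k] coactN n)) := by
          have lhsval : theta (k := k) act₂ (γ.toLinearMap ∘ₗ sinvL (k := k) hS1 hS2)
                β.toLinearMap
                ((LinearMap.rTensor H (Coalgebra.comul (R := k))
                    (Coalgebra.comul (R := k) h)) ⊗ₜ[k] coact₂ (m ⊗ₜ[k] n))
              = ∑ i ∈ sh, ∑ v ∈ tB i, ∑ d ∈ D, ∑ e ∈ Ee, ∑ r ∈ uB i v,
                  (actM (b12 i v r) (m₀ d) ⊗ₜ[k] actN (b11 i v r) (n₀ e)) ⊗ₜ[k]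
                    (β (b2 i v) * (m₁ d * n₁ e) * γ (Sinv (h1 i))) := by
            rw [hform2, hc2, sum_tmul, map_sum]
            refine Finset.sum_congr rfl fun i _ => ?_
            rw [sum_tmul, map_sum]
            refine Finset.sum_congr rfl fun v _ => ?_
            rw [tmul_sum, map_sum]
            refine Finset.sum_congr rfl fun d _ => ?_
            rw [tmul_sum, map_sum]
            refine Finset.sum_congr rfl fun e _ => ?_
            rw [theta_tmul,
              hact (b1 i v) (m₀ d) (n₀ e) (uB i v) (b11 i v) (b12 i v) (hB1 i v),
              sum_tmul]
            refine Finset.sum_congr rfl fun r _ => ?_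
            simp only [LinearMap.comp_apply, LinearEquiv.coe_coe, sinvL_apply]
          have rhsval : bigL (k := k)
                (theta (k := k) actM (α.toLinearMap ∘ₗ sinvL (k := k) hS1 hS2)
                  β.toLinearMap)
                (theta (k := k) actN (γ.toLinearMap ∘ₗ sinvL (k := k) hS1 hS2)
                  α.toLinearMap)
                ((embed (k := k)
                    (LinearMap.rTensor H
                      (LinearMap.lTensor H (Coalgebra.comul (R := k)))
                      (LinearMap.rTensor H (Coalgebra.comul (R := k))
                        (Coalgebra.comul (R := k) h)))) ⊗ₜ[k]
                  (coactM m ⊗ₜ[k] coactN n))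
              = ∑ i ∈ sh, ∑ v ∈ tB i, ∑ r ∈ uB i v, ∑ d ∈ D, ∑ e ∈ Ee,
                  (actM (b12 i v r) (m₀ d) ⊗ₜ[k] actN (b11 i v r) (n₀ e)) ⊗ₜ[k]
                    ((β (b2 i v) * m₁ d * α (Sinv 1)) *
                      (α 1 * n₁ e * γ (Sinv (h1 i)))) := by
            rw [hZθ, map_sum, sum_tmul, map_sum]
            refine Finset.sum_congr rfl fun i _ => ?_
            rw [map_sum, sum_tmul, map_sum]
            refine Finset.sum_congr rfl fun v _ => ?_
            rw [map_sum, sum_tmul, map_sum]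
            refine Finset.sum_congr rfl fun r _ => ?_
            have eM : theta (k := k) actM (α.toLinearMap ∘ₗ sinvL (k := k) hS1 hS2)
                  β.toLinearMap
                  (((1 ⊗ₜ[k] b12 i v r) ⊗ₜ[k] b2 i v) ⊗ₜ[k] coactM m)
                = ∑ d ∈ D, actM (b12 i v r) (m₀ d) ⊗ₜ[k]
                    (β (b2 i v) * m₁ d * α (Sinv 1)) := by
              rw [hcm, tmul_sum, map_sum]
              refine Finset.sum_congr rfl fun d _ => ?_
              rw [theta_tmul]
              simp only [LinearMap.comp_apply, LinearEquiv.coe_coe, sinvL_apply]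
            have eN : theta (k := k) actN (γ.toLinearMap ∘ₗ sinvL (k := k) hS1 hS2)
                  α.toLinearMap
                  (((h1 i ⊗ₜ[k] b11 i v r) ⊗ₜ[k] (1 : H)) ⊗ₜ[k] coactN n)
                = ∑ e ∈ Ee, actN (b11 i v r) (n₀ e) ⊗ₜ[k]
                    (α 1 * n₁ e * γ (Sinv (h1 i))) := by
              rw [hcn, tmul_sum, map_sum]
              refine Finset.sum_congr rfl fun e _ => ?_
              rw [theta_tmul]
              simp only [LinearMap.comp_apply, LinearEquiv.coe_coe, sinvL_apply]
            rw [embed_tmul, bigL_tmul, eM, eN, sum_tmul, map_sum]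
            refine Finset.sum_congr rfl fun d _ => ?_
            rw [tmul_sum, map_sum]
            exact Finset.sum_congr rfl fun e _ => by rw [fco_tmul]
          rw [lhsval, rhsval]
          refine Finset.sum_congr rfl fun i _ => Finset.sum_congr rfl fun v _ => ?_
          have reord : ∀ (G : ℕ → ℕ → ℕ → (M ⊗[k] N) ⊗[k] H),
              (∑ d ∈ D, ∑ e ∈ Ee, ∑ r ∈ uB i v, G d e r)
              = ∑ r ∈ uB i v, ∑ d ∈ D, ∑ e ∈ Ee, G d e r := by
            intro G
            calc (∑ d ∈ D, ∑ e ∈ Ee, ∑ r ∈ uB i v, G d e r)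
                = ∑ d ∈ D, ∑ r ∈ uB i v, ∑ e ∈ Ee, G d e r :=
                  Finset.sum_congr rfl fun d _ => Finset.sum_comm
              _ = ∑ r ∈ uB i v, ∑ d ∈ D, ∑ e ∈ Ee, G d e r := Finset.sum_comm
          rw [reord]
          refine Finset.sum_congr rfl fun r _ => Finset.sum_congr rfl fun d _ =>
            Finset.sum_congr rfl fun e _ => ?_
          rw [Sinv_one hS1 hS2, hα.2.1]
          congr 1
          simp [mul_assoc]
        rw [P2a, hembZb]
    rw [law w, hrep3, hrepc, sum_tmul, map_sum]
    refine Finset.sum_congr rfl fun i _ => ?_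
    rw [tmul_sum, map_sum]
    refine Finset.sum_congr rfl fun j _ => ?_
    rw [theta_tmul]
    simp


end
end

section
/- Let α, β, γ ∈ Aut_Hopf(H). If M is an (αβ,γβ)-Yetter-Drinfeld module, then F(M), defined as the same vector space M with left H-action h → m = β⁻¹(h)·m and unchanged right H-coaction, is an (α,γ)-Yetter-Drinfeld module; if N is an (α,γ)-Yetter-Drinfeld module, then G(N), defined as the same vector space N with left H-action h ⇀ n = β(h)·n and unchanged right H-coaction, is an (αβ,γβ)-Yetter-Drinfeld module; and F and G, both acting as identities on morphisms, are mutually inverse functors, so the categories _H𝒴𝒟^H(αβ,γβ) and _H𝒴𝒟^H(α,γ) are isomorphic. -/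
open TensorProduct

noncomputable section

open TensorProduct Coalgebra

namespace GYDAux

variable {k H : Type} [Field k] [Ring H] [HopfAlgebra k H]

local notation "S" => HopfAlgebra.antipode (R := k) (A := H)

section

variable (β : H ≃ₗ[k] H) (hβ : GYD.IsHopfAut k H β)
include hβ

lemma symm_one : β.symm (1 : H) = 1 := by
  apply β.injective; rw [β.apply_symm_apply, hβ.2.1]

lemma symm_mul (x y : H) : β.symm (x * y) = β.symm x * β.symm y := by
  apply β.injective
  rw [β.apply_symm_apply, hβ.1, β.apply_symm_apply, β.apply_symm_apply]

lemma counit_symm (x : H) : Coalgebra.counit (R := k) (β.symm x) = Coalgebra.counit (R := k) x := by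
  conv_rhs => rw [← β.apply_symm_apply x, hβ.2.2.2]

lemma comul_symm (x : H) :
    Coalgebra.comul (R := k) (β.symm x)
      = TensorProduct.map β.symm.toLinearMap β.symm.toLinearMap (Coalgebra.comul (R := k) x) := by
  have hinj : Function.Injective
      (TensorProduct.map β.toLinearMap β.toLinearMap : H ⊗[k] H →ₗ[k] H ⊗[k] H) := by
    intro u v huv
    have h1 : ∀ t : H ⊗[k] H, TensorProduct.map β.symm.toLinearMap β.symm.toLinearMap
        (TensorProduct.map β.toLinearMap β.toLinearMap t) = t := by
      intro t
      rw [← LinearMap.comp_apply, ← TensorProduct.map_comp]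
      simp
    rw [← h1 u, huv, h1]
  apply hinj
  rw [← hβ.2.2.1, β.apply_symm_apply, ← LinearMap.comp_apply, ← TensorProduct.map_comp]
  simp

lemma beta_algebraMap (r : k) : β (r • (1 : H)) = r • 1 := by
  rw [map_smul, hβ.2.1]

/-- key convolution-type identity: `∑ x₁ * β(S(β⁻¹ x₂)) = ε(x) • 1`. -/
lemma sum_mul_T (x : H) (r : Coalgebra.Repr k x (H × H)) :
    ∑ i ∈ r.index, r.left i * β (S (β.symm (r.right i)))
      = Coalgebra.counit (R := k) x • (1 : H) := by
  have h1 := HopfAlgebra.sum_mul_antipode_eq_smul (R := k)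
    ({ index := r.index,
       left := fun i => β.symm (r.left i), right := fun i => β.symm (r.right i),
       eq := by rw [comul_symm β hβ, ← r.eq, map_sum]; simp } : Coalgebra.Repr k (β.symm x) (H × H))
  dsimp only at h1
  have h2 : Coalgebra.counit (R := k) (β.symm x) = Coalgebra.counit (R := k) x :=
    counit_symm β hβ x
  rw [h2] at h1
  apply_fun β at h1
  rw [map_sum] at h1
  have h3 : ∀ i : r.ι, β (β.symm (r.left i) * S (β.symm (r.right i)))
      = r.left i * β (S (β.symm (r.right i))) := by
    intro i
    rw [hβ.1, β.apply_symm_apply]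
  calc ∑ i ∈ r.index, r.left i * β (S (β.symm (r.right i)))
      = ∑ i ∈ r.index, β (β.symm (r.left i) * S (β.symm (r.right i))) := by
        apply Finset.sum_congr rfl; intro i _; rw [h3]
    _ = β (Coalgebra.counit (R := k) x • 1) := h1
    _ = _ := beta_algebraMap β hβ _

lemma antipode_comm_symm (h : H) : β (S (β.symm h)) = S h := by
  classical
  set T : H →ₗ[k] H := β.toLinearMap ∘ₗ (S : H →ₗ[k] H) ∘ₗ β.symm.toLinearMap with hT
  have hTapp : ∀ x, T x = β (S (β.symm x)) := fun x => rfl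
  set r := ℛ k h with hr
  set r1 : ∀ i : r.ι, Coalgebra.Repr k (r.left i) (H × H) := fun i => ℛ k (r.left i) with hr1
  set r2 : ∀ i : r.ι, Coalgebra.Repr k (r.right i) (H × H) := fun i => ℛ k (r.right i) with hr2
  have hco := Coalgebra.sum_tmul_tmul_eq r r1 r2
  set Φ : H ⊗[k] (H ⊗[k] H) →ₗ[k] H :=
    LinearMap.mul' k H ∘ₗ TensorProduct.map (S : H →ₗ[k] H)
      (LinearMap.mul' k H ∘ₗ TensorProduct.map LinearMap.id T) with hΦ
  have hΦapp : ∀ (x y z : H), Φ (x ⊗ₜ[k] (y ⊗ₜ[k] z)) = S x * (y * T z) := by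
    intro x y z; simp [hΦ]
  apply_fun Φ at hco
  simp only [map_sum, hΦapp] at hco
  -- now evaluate both sides
  have hsum1 : ∑ i ∈ r.index, Coalgebra.counit (R := k) (r.left i) • r.right i = h := by
    have h0 := Coalgebra.sum_counit_tmul_eq (R := k) r
    apply_fun TensorProduct.lid k H at h0
    rw [map_sum] at h0
    simp only [TensorProduct.lid_tmul, one_smul] at h0
    exact h0
  have hsum2 : ∑ i ∈ r.index, Coalgebra.counit (R := k) (r.right i) • r.left i = h := by
    have h0 := Coalgebra.sum_tmul_counit_eq (R := k) r
    apply_fun TensorProduct.rid k H at h0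
    rw [map_sum] at h0
    simp only [TensorProduct.rid_tmul, one_smul] at h0
    exact h0
  have hL : ∑ i ∈ r.index, ∑ j ∈ (r1 i).index,
      S ((r1 i).left j) * ((r1 i).right j * T (r.right i)) = T h := by
    calc ∑ i ∈ r.index, ∑ j ∈ (r1 i).index,
        S ((r1 i).left j) * ((r1 i).right j * T (r.right i))
        = ∑ i ∈ r.index, (∑ j ∈ (r1 i).index,
            S ((r1 i).left j) * (r1 i).right j) * T (r.right i) := by
          apply Finset.sum_congr rfl; intro i _
          rw [Finset.sum_mul]
          exact Finset.sum_congr rfl fun j _ => (mul_assoc _ _ _).symm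
      _ = ∑ i ∈ r.index, (Coalgebra.counit (R := k) (r.left i) • (1 : H)) * T (r.right i) := by
          apply Finset.sum_congr rfl; intro i _
          rw [HopfAlgebra.sum_antipode_mul_eq_smul (R := k) (r1 i)]
      _ = ∑ i ∈ r.index, Coalgebra.counit (R := k) (r.left i) • T (r.right i) := by
          simp [smul_mul_assoc]
      _ = T (∑ i ∈ r.index, Coalgebra.counit (R := k) (r.left i) • r.right i) := by
          rw [map_sum]
          exact Finset.sum_congr rfl fun i _ => (map_smul T _ _).symm
      _ = T h := by rw [hsum1]
  have hR : ∑ i ∈ r.index, ∑ j ∈ (r2 i).index,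
      S (r.left i) * ((r2 i).left j * T ((r2 i).right j)) = S h := by
    calc ∑ i ∈ r.index, ∑ j ∈ (r2 i).index,
        S (r.left i) * ((r2 i).left j * T ((r2 i).right j))
        = ∑ i ∈ r.index, S (r.left i) *
            (∑ j ∈ (r2 i).index, (r2 i).left j * T ((r2 i).right j)) := by
          apply Finset.sum_congr rfl; intro i _
          rw [Finset.mul_sum]
      _ = ∑ i ∈ r.index, S (r.left i) * (Coalgebra.counit (R := k) (r.right i) • (1 : H)) := by
          apply Finset.sum_congr rfl; intro i _
          congr 1
          simp only [hTapp]
          exact sum_mul_T β hβ (r.right i) (r2 i)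
      _ = ∑ i ∈ r.index, Coalgebra.counit (R := k) (r.right i) • S (r.left i) := by
          simp [mul_smul_comm]
      _ = S (∑ i ∈ r.index, Coalgebra.counit (R := k) (r.right i) • r.left i) := by
          rw [map_sum]
          exact Finset.sum_congr rfl fun i _ =>
            (map_smul (S : H →ₗ[k] H) _ _).symm
      _ = S h := by rw [hsum2]
  rw [hL, hR] at hco
  exact hco

lemma antipode_comm (x : H) : S (β x) = β (S x) := by
  have := antipode_comm_symm β hβ (β x)
  rw [β.symm_apply_apply] at this
  exact this.symm

end

section

variable (Sinv : H → H) (hS : GYD.IsAntipodeInv k H Sinv)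
  (β : H ≃ₗ[k] H) (hβ : GYD.IsHopfAut k H β)
include hS hβ

lemma sinv_comm (x : H) : Sinv (β x) = β (Sinv x) := by
  conv_lhs => rw [← hS.1 x]
  rw [← antipode_comm β hβ, hS.2]

lemma sinv_comm_symm (x : H) : Sinv (β.symm x) = β.symm (Sinv x) := by
  apply β.injective
  rw [← sinv_comm Sinv hS β hβ, β.apply_symm_apply, β.apply_symm_apply]

end

end GYDAux

theorem statement_2
    (k H : Type) [Field k] [Ring H] [HopfAlgebra k H]
    (Sinv : H → H) (hS : GYD.IsAntipodeInv k H Sinv)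
    (α β γ : H ≃ₗ[k] H)
    (hα : GYD.IsHopfAut k H α) (hβ : GYD.IsHopfAut k H β) (hγ : GYD.IsHopfAut k H γ) :
    (∀ (M : Type) [AddCommGroup M] [Module k M]
        (act : H →ₗ[k] M →ₗ[k] M) (coact : M →ₗ[k] M ⊗[k] H),
        GYD.IsYD k H Sinv (⇑α ∘ ⇑β) (⇑γ ∘ ⇑β) act coact →
        GYD.IsYD k H Sinv ⇑α ⇑γ (act ∘ₗ β.symm.toLinearMap) coact) ∧
    (∀ (N : Type) [AddCommGroup N] [Module k N]
        (act : H →ₗ[k] N →ₗ[k] N) (coact : N →ₗ[k] N ⊗[k] H),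
        GYD.IsYD k H Sinv ⇑α ⇑γ act coact →
        GYD.IsYD k H Sinv (⇑α ∘ ⇑β) (⇑γ ∘ ⇑β) (act ∘ₗ β.toLinearMap) coact) ∧
    (∀ (M : Type) [AddCommGroup M] [Module k M] (act : H →ₗ[k] M →ₗ[k] M),
        (act ∘ₗ β.symm.toLinearMap) ∘ₗ β.toLinearMap = act ∧
        (act ∘ₗ β.toLinearMap) ∘ₗ β.symm.toLinearMap = act) ∧
    (∀ (M N : Type) [AddCommGroup M] [Module k M] [AddCommGroup N] [Module k N]
        (actM : H →ₗ[k] M →ₗ[k] M) (actN : H →ₗ[k] N →ₗ[k] N) (f : M →ₗ[k] N),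
        (∀ (h : H) (m : M), f (actM h m) = actN h (f m)) ↔
        (∀ (h : H) (m : M), f ((actM ∘ₗ β.symm.toLinearMap) h m)
            = (actN ∘ₗ β.symm.toLinearMap) h (f m))) := by
  classical
  refine ⟨?_, ?_, ?_, ?_⟩
  · -- F : (αβ, γβ) → (α, γ)
    intro M _ _ act coact hM
    obtain ⟨h1, h2, h3, h4, h5⟩ := hM
    refine ⟨?_, ?_, h3, h4, ?_⟩
    · intro m
      simp only [LinearMap.comp_apply, LinearEquiv.coe_coe]
      rw [GYDAux.symm_one β hβ]
      exact h1 m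
    · intro g h m
      simp only [LinearMap.comp_apply, LinearEquiv.coe_coe]
      rw [GYDAux.symm_mul β hβ]
      exact h2 _ _ m
    · intro h m s t a b c m₀ m₁ hcomul hcoact
      have key : LinearMap.rTensor H (Coalgebra.comul (R := k))
          (Coalgebra.comul (R := k) (β.symm h))
          = ∑ i ∈ s, (β.symm (a i) ⊗ₜ[k] β.symm (b i)) ⊗ₜ[k] β.symm (c i) := by
        have comm : (LinearMap.rTensor H (Coalgebra.comul (R := k))) ∘ₗ
            TensorProduct.map β.symm.toLinearMap β.symm.toLinearMap
            = TensorProduct.map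
                (TensorProduct.map β.symm.toLinearMap β.symm.toLinearMap) β.symm.toLinearMap
              ∘ₗ LinearMap.rTensor H (Coalgebra.comul (R := k)) := by
          apply TensorProduct.ext'
          intro x y
          simp [GYDAux.comul_symm β hβ x]
        rw [GYDAux.comul_symm β hβ h, ← LinearMap.comp_apply, comm, LinearMap.comp_apply,
          hcomul, map_sum]
        simp
      have step := h5 (β.symm h) m s t (fun i => β.symm (a i)) (fun i => β.symm (b i))
        (fun i => β.symm (c i)) m₀ m₁ key hcoact
      simp only [Function.comp_apply, GYDAux.sinv_comm_symm Sinv hS β hβ,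
        β.apply_symm_apply] at step
      simp only [LinearMap.comp_apply, LinearEquiv.coe_coe]
      exact step
  · -- G : (α, γ) → (αβ, γβ)
    intro N _ _ act coact hN
    obtain ⟨h1, h2, h3, h4, h5⟩ := hN
    refine ⟨?_, ?_, h3, h4, ?_⟩
    · intro m
      simp only [LinearMap.comp_apply, LinearEquiv.coe_coe]
      rw [hβ.2.1]
      exact h1 m
    · intro g h m
      simp only [LinearMap.comp_apply, LinearEquiv.coe_coe]
      rw [hβ.1]
      exact h2 _ _ m
    · intro h m s t a b c m₀ m₁ hcomul hcoact
      have key : LinearMap.rTensor H (Coalgebra.comul (R := k))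
          (Coalgebra.comul (R := k) (β h))
          = ∑ i ∈ s, (β (a i) ⊗ₜ[k] β (b i)) ⊗ₜ[k] β (c i) := by
        have comm : (LinearMap.rTensor H (Coalgebra.comul (R := k))) ∘ₗ
            TensorProduct.map β.toLinearMap β.toLinearMap
            = TensorProduct.map
                (TensorProduct.map β.toLinearMap β.toLinearMap) β.toLinearMap
              ∘ₗ LinearMap.rTensor H (Coalgebra.comul (R := k)) := by
          apply TensorProduct.ext'
          intro x y
          simp [hβ.2.2.1 x]
        rw [hβ.2.2.1 h, ← LinearMap.comp_apply, comm, LinearMap.comp_apply, hcomul, map_sum]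
        simp
      have step := h5 (β h) m s t (fun i => β (a i)) (fun i => β (b i))
        (fun i => β (c i)) m₀ m₁ key hcoact
      simp only [GYDAux.sinv_comm Sinv hS β hβ] at step
      simp only [LinearMap.comp_apply, LinearEquiv.coe_coe, Function.comp_apply]
      exact step
  · -- F and G mutually inverse on objects
    intro M _ _ act
    constructor <;> (ext h m; simp)
  · -- morphism condition transfer
    intro M N _ _ _ _ actM actN f
    constructor
    · intro hf h m
      simp only [LinearMap.comp_apply, LinearEquiv.coe_coe]
      exact hf _ m
    · intro hf h m
      have := hf (β h) m
      simpa only [LinearMap.comp_apply, LinearEquiv.coe_coe, β.symm_apply_apply] using this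


end
end
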